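/- arXiv:2401.07668 — 5 statements merged into one kernel-verified Lean document; each statement's English description precedes it below -/
import Mathlib

section
/- Let ψ ∈ C²([0,∞);[0,∞)) and set Φ(v) := ψ(|v|²) for v ∈ ℝ^d. Assume C_Φ := ∫_{ℝ^d} e^{-Φ(v)} dv < ∞, ∫_{ℝ^d} (|∇Φ(v)|² + ‖∇²Φ(v)‖) μ₂(dv) < ∞ (operator norm of the Hessian), and lim_{|v|→∞} |∇(e^{-Φ})(v)| = 0. Let U ∈ C¹(ℝ^d). Then for every g ∈ C²_b(ℝ^d) and every x ∈ ℝ^d: ∫_{ℝ^d} ( ⟨∇Φ(v), (∇²g(x)) ∇Φ(v)⟩ − ⟨∇U(x), (∇²Φ(v)) ∇g(x)⟩ ) μ₂(dv) = c* ( Δg(x) − ⟨∇U(x), ∇g(x)⟩ ), where c* := (2 ω_d / C_Φ) ∫_0^∞ u^{d/2} ψ'(u)² e^{-ψ(u)} du and ω_d is the volume of the unit ball in ℝ^d. In other words, the kinetic projection identity π L₀² π = c* L_OD holds, where L_OD g = Δg − ⟨∇U, ∇g⟩ is the overdamped Langevin generator. -/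
open MeasureTheory Real Filter Topology Set
open scoped RealInnerProductSpace
open scoped ENNReal NNReal

set_option maxHeartbeats 1000000

noncomputable section

/-- `d`-dimensional Euclidean space. -/
abbrev E (d : ℕ) : Type := EuclideanSpace ℝ (Fin d)

/-- The probability measure `μ₂` with density proportional to `e^{-Φ}`. -/
def mu2 (d : ℕ) (Φ : E d → ℝ) : Measure (E d) :=
  volume.withDensity fun v =>
    ENNReal.ofReal (Real.exp (-(Φ v)) / ∫ w : E d, Real.exp (-(Φ w)))

/-- The Laplacian of `g : ℝ^d → ℝ`, as the trace of the Hessian. -/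
def lapl (d : ℕ) (g : E d → ℝ) (x : E d) : ℝ :=
  ∑ i : Fin d, ⟪(fderiv ℝ (gradient g) x) (EuclideanSpace.single i 1),
    EuclideanSpace.single i 1⟫

lemma sq_mem_Ici {d : ℕ} (v : E d) : ‖v‖ ^ 2 ∈ Ici (0:ℝ) := mem_Ici.mpr (by positivity)

lemma radial_hasFDerivAt {d : ℕ} {θ : ℝ → ℝ} {c : ℝ} (v : E d)
    (hθ : HasDerivWithinAt θ c (Ici 0) (‖v‖ ^ 2)) :
    HasFDerivAt (fun w : E d => θ (‖w‖ ^ 2)) ((2 * c) • innerSL ℝ v) v := by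
  have hsq : HasFDerivAt (fun w : E d => (⟪w, w⟫ : ℝ))
      ((fderivInnerCLM ℝ ((v : E d), v)).comp
        ((ContinuousLinearMap.id ℝ (E d)).prod (ContinuousLinearMap.id ℝ (E d)))) v :=
    (hasFDerivAt_id v).inner ℝ (hasFDerivAt_id v)
  have hsq' : HasFDerivAt (fun w : E d => ‖w‖ ^ 2)
      ((fderivInnerCLM ℝ ((v : E d), v)).comp
        ((ContinuousLinearMap.id ℝ (E d)).prod (ContinuousLinearMap.id ℝ (E d)))) v := by
    simpa only [real_inner_self_eq_norm_sq] using hsq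
  have hcomp : HasFDerivWithinAt (fun w : E d => θ (‖w‖ ^ 2))
      ((ContinuousLinearMap.smulRight (1 : ℝ →L[ℝ] ℝ) c).comp
        ((fderivInnerCLM ℝ ((v : E d), v)).comp
          ((ContinuousLinearMap.id ℝ (E d)).prod (ContinuousLinearMap.id ℝ (E d)))))
      univ v := by
    refine HasFDerivWithinAt.comp v (hθ.hasFDerivWithinAt) (hsq'.hasFDerivWithinAt)
      (fun w _ => sq_mem_Ici w)
  rw [hasFDerivWithinAt_univ] at hcomp
  refine hcomp.congr_fderiv ?_
  ext w
  simp [real_inner_comm v w]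
  ring

lemma radial_hasGradientAt {d : ℕ} {θ : ℝ → ℝ} {c : ℝ} (v : E d)
    (hθ : HasDerivWithinAt θ c (Ici 0) (‖v‖ ^ 2)) :
    HasGradientAt (fun w : E d => θ (‖w‖ ^ 2)) ((2 * c) • v) v := by
  rw [hasGradientAt_iff_hasFDerivAt]
  refine (radial_hasFDerivAt v hθ).congr_fderiv ?_
  ext w
  simp [InnerProductSpace.toDual_apply_apply, real_inner_smul_left]

lemma euclid_norm_sq_eq_sum {d : ℕ} (w : E d) : ∑ i, (w i)^2 = ‖w‖^2 := by
  simp only [EuclideanSpace.norm_eq, Real.norm_eq_abs]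
  rw [Real.sq_sqrt (by positivity)]
  simp [sq_abs]

lemma euclid_basis_expand {d : ℕ} (w : E d) :
    w = ∑ j, w j • EuclideanSpace.single j (1:ℝ) := by
  have h := (EuclideanSpace.basisFun (Fin d) ℝ).sum_repr w
  simp only [EuclideanSpace.basisFun_apply, EuclideanSpace.basisFun_repr] at h
  exact h.symm

lemma inner_clm_expand {d : ℕ} (H : E d →L[ℝ] E d) (w : E d) :
    (⟪w, H w⟫:ℝ) = ∑ j, ∑ i, H (EuclideanSpace.single j 1) i * (w i * w j) := by
  conv_lhs => rw [euclid_basis_expand w]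
  simp only [map_sum, _root_.map_smul, inner_sum, sum_inner, real_inner_smul_left,
    real_inner_smul_right, EuclideanSpace.inner_single_left, conj_trivial, one_mul, smul_eq_mul]
  exact Finset.sum_congr rfl fun j _ => Finset.sum_congr rfl fun i _ => by ring

lemma euclid_inner_eq_sum {d : ℕ} (u w : E d) : (⟪u, w⟫:ℝ) = ∑ i, u i * w i := by
  simp [PiLp.inner_apply, RCLike.inner_apply, conj_trivial, mul_comm]

lemma integral_coord_mul_coord_radial {d : ℕ} (f : ℝ → ℝ) {i j : Fin d} (hij : i ≠ j) :
    ∫ v : E d, v i * v j * f ‖v‖ = 0 := by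
  classical
  set σ : E d ≃ₗᵢ[ℝ] E d := LinearIsometryEquiv.piLpCongrRight 2
    (fun k : Fin d => if k = i then LinearIsometryEquiv.neg ℝ else
      LinearIsometryEquiv.refl ℝ ℝ) with hσdef
  have hσ : ∀ (v : E d) (k : Fin d), σ v k = if k = i then -(v k) else v k := by
    intro v k
    rw [hσdef]
    rw [LinearIsometryEquiv.piLpCongrRight_apply]
    rw [PiLp.toLp_apply]
    split <;> simp_all
  have hcomp := (σ.measurePreserving).integral_comp
    (σ.toHomeomorph.measurableEmbedding) (fun v : E d => v i * v j * f ‖v‖)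
  have heq : ∀ v : E d, (σ v) i * (σ v) j * f ‖σ v‖ = -(v i * v j * f ‖v‖) := by
    intro v
    rw [σ.norm_map, hσ v i, hσ v j, if_pos rfl, if_neg hij.symm]
    ring
  simp only [heq] at hcomp
  rw [integral_neg] at hcomp
  linarith

lemma integral_coord_sq_radial {d : ℕ} (f : ℝ → ℝ) (i j : Fin d) :
    ∫ v : E d, (v i)^2 * f ‖v‖ = ∫ v : E d, (v j)^2 * f ‖v‖ := by
  classical
  set τ : E d ≃ₗᵢ[ℝ] E d :=
    LinearIsometryEquiv.piLpCongrLeft 2 ℝ ℝ (Equiv.swap i j) with hτdef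
  have hτ : ∀ (v : E d) (k : Fin d), τ v k = v (Equiv.swap i j k) := by
    intro v k
    rw [hτdef, LinearIsometryEquiv.piLpCongrLeft_apply]
    simp [Equiv.piCongrLeft'_apply]
  have hcomp := (τ.measurePreserving).integral_comp
    (τ.toHomeomorph.measurableEmbedding) (fun v : E d => (v i)^2 * f ‖v‖)
  have heq : ∀ v : E d, ((τ v) i)^2 * f ‖τ v‖ = (v j)^2 * f ‖v‖ := by
    intro v
    rw [τ.norm_map, hτ v i, Equiv.swap_apply_left]
  simp only [heq] at hcomp
  exact hcomp.symm

/-- The kinetic projection identity `π L₀² π = c* L_OD`: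
for radial `Φ(v) = ψ(|v|²)`,
`∫ (⟨∇Φ(v), ∇²g(x) ∇Φ(v)⟩ - ⟨∇U(x), ∇²Φ(v) ∇g(x)⟩) μ₂(dv)
  = c* (Δg(x) - ⟨∇U(x), ∇g(x)⟩)`. -/
theorem statement3
    (d : ℕ) (hd : 0 < d)
    (ψ : ℝ → ℝ) (hψ : ContDiffOn ℝ 2 ψ (Ici 0)) (hψ0 : ∀ r ∈ Ici (0 : ℝ), 0 ≤ ψ r)
    (Φ : E d → ℝ) (hΦdef : ∀ v, Φ v = ψ (‖v‖ ^ 2))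
    (hCΦ : Integrable fun v : E d => Real.exp (-(Φ v)))
    (hmom : Integrable (fun v : E d => ‖gradient Φ v‖ ^ 2 + ‖fderiv ℝ (gradient Φ) v‖)
      (mu2 d Φ))
    (hdecay : Tendsto (fun v : E d => ‖gradient (fun w => Real.exp (-(Φ w))) v‖)
      (Bornology.cobounded (E d)) (𝓝 0))
    (U : E d → ℝ) (hU : ContDiff ℝ 1 U)
    (g : E d → ℝ) (hg : ContDiff ℝ 2 g)
    (hgb : ∃ M, ∀ x, |g x| + ‖gradient g x‖ + ‖fderiv ℝ (gradient g) x‖ ≤ M)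
    (x : E d) :
    ∫ v, (⟪gradient Φ v, (fderiv ℝ (gradient g) x) (gradient Φ v)⟫
          - ⟪gradient U x, (fderiv ℝ (gradient Φ) v) (gradient g x)⟫) ∂(mu2 d Φ)
      = ((2 * (volume (Metric.ball (0 : E d) 1)).toReal / ∫ v : E d, Real.exp (-(Φ v)))
            * ∫ u in Ioi (0 : ℝ),
                u ^ ((d : ℝ) / 2) * (derivWithin ψ (Ici 0) u) ^ 2 * Real.exp (-(ψ u)))
          * (lapl d g x - ⟪gradient U x, gradient g x⟫) := by
  classical
  haveI : Nonempty (Fin d) := ⟨⟨0, hd⟩⟩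
  have hΦfun : Φ = fun w : E d => ψ (‖w‖ ^ 2) := funext hΦdef
  subst hΦfun
  set dψ : ℝ → ℝ := derivWithin ψ (Ici 0) with hdψdef
  set Ψ : E d → ℝ := fun w : E d => ψ (‖w‖ ^ 2) with hΨdef
  set ι : E d → ℝ := fun v : E d => Real.exp (-Ψ v) with hιdef
  set C : ℝ := ∫ v : E d, ι v with hCdef
  set ω : ℝ := (volume (Metric.ball (0 : E d) 1)).toReal with hωdef
  set K : ℝ := ∫ u in Ioi (0:ℝ), u ^ ((d:ℝ)/2) * dψ u ^ 2 * Real.exp (-ψ u) with hKdef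
  set a : E d := gradient U x with hadef
  set b : E d := gradient g x with hbdef
  set H : E d →L[ℝ] E d := fderiv ℝ (gradient g) x with hHdef
  set G : E d → E d := fun w : E d => (2 * dψ (‖w‖ ^ 2)) • w with hGdef
  -- basic analytic facts
  have hψ1 : ContDiffOn ℝ 1 ψ (Ici 0) := hψ.of_le one_le_two
  have hdψC : ContDiffOn ℝ 1 dψ (Ici 0) := hψ.derivWithin (uniqueDiffOn_Ici 0) (by norm_num)
  have hψd : ∀ u : ℝ, u ∈ Ici (0:ℝ) → HasDerivWithinAt ψ (dψ u) (Ici 0) u :=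
    fun u hu => (hψ1.differentiableOn one_ne_zero u hu).hasDerivWithinAt
  have hGrad : ∀ v : E d, HasGradientAt Ψ (G v) v := by
    intro v
    simp only [hΨdef, hGdef]
    exact radial_hasGradientAt v (hψd _ (sq_mem_Ici v))
  have hgradG : gradient Ψ = G := funext fun v => (hGrad v).gradient
  rw [hgradG] at hmom ⊢
  have hGdiff : Differentiable ℝ G := by
    rw [hGdef]
    intro v
    have h1 : HasFDerivAt (fun w : E d => dψ (‖w‖ ^ 2))
        ((2 * derivWithin dψ (Ici 0) (‖v‖ ^ 2)) • innerSL ℝ v) v :=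
      radial_hasFDerivAt v ((hdψC.differentiableOn one_ne_zero _ (sq_mem_Ici v)).hasDerivWithinAt)
    exact ((h1.differentiableAt.const_mul (2:ℝ)).smul differentiableAt_id)
  have hGcont : Continuous G := hGdiff.continuous
  have hΨdiff : Differentiable ℝ Ψ := fun v => (hGrad v).hasFDerivAt.differentiableAt
  have hιcont : Continuous ι := by
    rw [hιdef]; exact (hΨdiff.continuous.neg).rexp
  have hιnonneg : ∀ v, 0 ≤ ι v := fun v => by rw [hιdef]; positivity
  have hιint : Integrable ι := hCΦ
  have hCpos : 0 < C := by
    rw [hCdef, integral_pos_iff_support_of_nonneg hιnonneg hιint]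
    have hsupp : Function.support ι = univ := Set.eq_univ_of_forall fun v => by
      rw [hιdef]; exact (Real.exp_pos _).ne'
    rw [hsupp]
    have h1 : (0:ℝ≥0∞) < volume (Metric.ball (0:E d) 1) := Metric.measure_ball_pos volume (0:E d) one_pos
    exact lt_of_lt_of_le h1 (measure_mono (subset_univ _))
  have hwnn : Measurable fun v : E d => Real.toNNReal (ι v / C) :=
    ((hιcont.measurable).div_const C).real_toNNReal
  have hmu2eq : mu2 d Ψ
      = volume.withDensity fun v => ((Real.toNNReal (ι v / C) : ℝ≥0) : ℝ≥0∞) := by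
    simp only [mu2, hιdef, hCdef]
    rfl
  -- conversion between mu2-integrals and weighted volume integrals
  have hconv : ∀ f : E d → ℝ,
      ∫ v, f v ∂(mu2 d Ψ) = ∫ v, (ι v / C) * f v := by
    intro f
    rw [hmu2eq, integral_withDensity_eq_integral_smul hwnn]
    congr 1
    funext v
    rw [NNReal.smul_def, Real.coe_toNNReal _ (div_nonneg (hιnonneg v) hCpos.le), smul_eq_mul]
  have hmomv : Integrable (fun v => (‖G v‖^2 + ‖fderiv ℝ G v‖) * ι v) volume := by
    have hmom' : Integrable (fun v : E d => ‖G v‖ ^ 2 + ‖fderiv ℝ G v‖) (mu2 d Ψ) := hmom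
    rw [hmu2eq, integrable_withDensity_iff_integrable_smul hwnn] at hmom'
    refine (hmom'.const_mul C).congr (Eventually.of_forall fun v => ?_)
    simp only [NNReal.smul_def, smul_eq_mul]
    rw [Real.coe_toNNReal _ (div_nonneg (hιnonneg v) hCpos.le)]
    field_simp
  have hmomv1 : Integrable (fun v => ‖G v‖^2 * ι v) volume := by
    refine hmomv.mono' ((hGcont.norm.pow 2).mul hιcont).aestronglyMeasurable
      (Eventually.of_forall fun v => ?_)
    rw [Real.norm_eq_abs, abs_of_nonneg (by positivity)]
    nlinarith [hιnonneg v, norm_nonneg (fderiv ℝ G v), sq_nonneg ‖G v‖]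
  have hmomv2 : Integrable (fun v => ‖fderiv ℝ G v‖ * ι v) volume := by
    refine hmomv.mono' (((measurable_fderiv ℝ G).norm.mul
      hιcont.measurable).aestronglyMeasurable) (Eventually.of_forall fun v => ?_)
    rw [Real.norm_eq_abs, abs_of_nonneg (by positivity)]
    nlinarith [hιnonneg v, norm_nonneg (fderiv ℝ G v), sq_nonneg ‖G v‖]
  -- integrability of main integrands
  have hcoord : ∀ (w : E d) (i : Fin d), (w i)^2 ≤ ‖w‖^2 := by
    intro w i
    rw [← euclid_norm_sq_eq_sum]
    exact Finset.single_le_sum (fun k _ => sq_nonneg (w k)) (Finset.mem_univ i)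
  have hGci : ∀ i : Fin d, Continuous fun v : E d => G v i := fun i =>
    (EuclideanSpace.proj i).continuous.comp hGcont
  have hTint : ∀ i j : Fin d, Integrable (fun v => G v i * G v j * ι v) volume := by
    intro i j
    refine hmomv1.mono' (((hGci i).mul (hGci j)).mul hιcont).aestronglyMeasurable
      (Eventually.of_forall fun v => ?_)
    rw [Real.norm_eq_abs, abs_mul, abs_mul, abs_of_nonneg (hιnonneg v)]
    have hab : |G v i| * |G v j| ≤ ‖G v‖^2 := by
      nlinarith [hcoord (G v) i, hcoord (G v) j, sq_abs (G v i), sq_abs (G v j),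
        sq_nonneg (|G v i| - |G v j|), abs_nonneg (G v i), abs_nonneg (G v j)]
    exact mul_le_mul_of_nonneg_right hab (hιnonneg v)
  have hintA : Integrable (fun v => (⟪G v, H (G v)⟫:ℝ) * ι v) volume := by
    refine (hmomv1.const_mul ‖H‖).mono'
      ((hGcont.inner (H.continuous.comp hGcont)).mul hιcont).aestronglyMeasurable
      (Eventually.of_forall fun v => ?_)
    rw [Real.norm_eq_abs, abs_mul, abs_of_nonneg (hιnonneg v)]
    have h1 : |(⟪G v, H (G v)⟫:ℝ)| ≤ ‖G v‖ * ‖H (G v)‖ := abs_real_inner_le_norm _ _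
    have h2 : ‖H (G v)‖ ≤ ‖H‖ * ‖G v‖ := H.le_opNorm _
    have h3 : |(⟪G v, H (G v)⟫:ℝ)| ≤ ‖H‖ * ‖G v‖^2 := by
      nlinarith [norm_nonneg (G v), norm_nonneg (H (G v)), abs_nonneg ((⟪G v, H (G v)⟫:ℝ))]
    calc |(⟪G v, H (G v)⟫:ℝ)| * ι v ≤ (‖H‖ * ‖G v‖^2) * ι v :=
          mul_le_mul_of_nonneg_right h3 (hιnonneg v)
      _ = ‖H‖ * (‖G v‖^2 * ι v) := by ring
  have hintB : Integrable (fun v => (⟪a, fderiv ℝ G v b⟫:ℝ) * ι v) volume := by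
    refine (hmomv2.const_mul (‖a‖ * ‖b‖)).mono'
      (((measurable_const.inner (measurable_fderiv_apply_const ℝ G b)).mul
        hιcont.measurable).aestronglyMeasurable)
      (Eventually.of_forall fun v => ?_)
    rw [Real.norm_eq_abs, abs_mul, abs_of_nonneg (hιnonneg v)]
    have h1 : |(⟪a, fderiv ℝ G v b⟫:ℝ)| ≤ ‖a‖ * ‖fderiv ℝ G v b‖ := abs_real_inner_le_norm _ _
    have h2 : ‖fderiv ℝ G v b‖ ≤ ‖fderiv ℝ G v‖ * ‖b‖ := (fderiv ℝ G v).le_opNorm _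
    have h3 : |(⟪a, fderiv ℝ G v b⟫:ℝ)| ≤ ‖a‖ * ‖b‖ * ‖fderiv ℝ G v‖ := by
      nlinarith [norm_nonneg a, norm_nonneg b, norm_nonneg (fderiv ℝ G v),
        norm_nonneg (fderiv ℝ G v b)]
    calc |(⟪a, fderiv ℝ G v b⟫:ℝ)| * ι v ≤ (‖a‖ * ‖b‖ * ‖fderiv ℝ G v‖) * ι v :=
          mul_le_mul_of_nonneg_right h3 (hιnonneg v)
      _ = ‖a‖ * ‖b‖ * (‖fderiv ℝ G v‖ * ι v) := by ring
  have hintab : Integrable (fun v => (⟪a, G v⟫:ℝ) * (⟪b, G v⟫:ℝ) * ι v) volume := by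
    refine (hmomv1.const_mul (‖a‖ * ‖b‖)).mono'
      (((continuous_const.inner hGcont).mul (continuous_const.inner hGcont)).mul
        hιcont).aestronglyMeasurable
      (Eventually.of_forall fun v => ?_)
    rw [Real.norm_eq_abs, abs_mul, abs_mul, abs_of_nonneg (hιnonneg v)]
    have h1 : |(⟪a, G v⟫:ℝ)| ≤ ‖a‖ * ‖G v‖ := abs_real_inner_le_norm _ _
    have h2 : |(⟪b, G v⟫:ℝ)| ≤ ‖b‖ * ‖G v‖ := abs_real_inner_le_norm _ _
    have h3 : |(⟪a, G v⟫:ℝ)| * |(⟪b, G v⟫:ℝ)| ≤ ‖a‖ * ‖b‖ * ‖G v‖^2 := by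
      nlinarith [abs_nonneg ((⟪a, G v⟫:ℝ)), abs_nonneg ((⟪b, G v⟫:ℝ)),
        norm_nonneg a, norm_nonneg b, norm_nonneg (G v)]
    calc |(⟪a, G v⟫:ℝ)| * |(⟪b, G v⟫:ℝ)| * ι v ≤ (‖a‖ * ‖b‖ * ‖G v‖^2) * ι v :=
          mul_le_mul_of_nonneg_right h3 (hιnonneg v)
      _ = ‖a‖ * ‖b‖ * (‖G v‖^2 * ι v) := by ring
  -- integration by parts
  have hΨfd : ∀ v : E d, HasFDerivAt Ψ ((2 * dψ (‖v‖ ^ 2)) • innerSL ℝ v) v := by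
    intro v
    rw [hΨdef]
    exact radial_hasFDerivAt v (hψd _ (sq_mem_Ici v))
  have hιfd : ∀ v : E d, HasFDerivAt ι
      (ι v • (-((2 * dψ (‖v‖ ^ 2)) • innerSL ℝ v))) v := by
    intro v
    have h := ((hΨfd v).neg).exp
    rw [hιdef]
    exact h
  have hfform : ∀ v : E d, fderiv ℝ (fun w : E d => (⟪a, G w⟫:ℝ)) v b
      = ⟪a, fderiv ℝ G v b⟫ := by
    intro v
    rw [fderiv_inner_apply ℝ (differentiableAt_const a) (hGdiff v) b]
    simp
  have hιform : ∀ v : E d, fderiv ℝ ι v b = -(⟪b, G v⟫:ℝ) * ι v := by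
    intro v
    rw [(hιfd v).fderiv]
    simp only [ContinuousLinearMap.coe_smul', Pi.smul_apply, ContinuousLinearMap.neg_apply,
      ContinuousLinearMap.coe_smul, innerSL_apply_apply, smul_eq_mul, hGdef]
    rw [real_inner_smul_right, real_inner_comm v b]
    ring
  have hfdiff : Differentiable ℝ fun v : E d => (⟪a, G v⟫:ℝ) :=
    fun v => (differentiableAt_const a).inner ℝ (hGdiff v)
  have hιdiff : Differentiable ℝ ι := fun v => (hιfd v).differentiableAt
  have h1 : Integrable (fun v => fderiv ℝ (fun w : E d => (⟪a, G w⟫:ℝ)) v b * ι v) volume := by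
    refine hintB.congr (Eventually.of_forall fun v => ?_)
    simp only [hfform v]
  have h2 : Integrable (fun v => (⟪a, G v⟫:ℝ) * fderiv ℝ ι v b) volume := by
    refine (hintab.neg).congr (Eventually.of_forall fun v => ?_)
    simp only [Pi.neg_apply, hιform v]
    ring
  have h3 : Integrable (fun v => (⟪a, G v⟫:ℝ) * ι v) volume := by
    refine ((hιint.add hmomv1).const_mul ‖a‖).mono'
      ((continuous_const.inner hGcont).mul hιcont).aestronglyMeasurable
      (Eventually.of_forall fun v => ?_)
    rw [Real.norm_eq_abs, abs_mul, abs_of_nonneg (hιnonneg v)]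
    simp only [Pi.add_apply]
    have ha1 : |(⟪a, G v⟫:ℝ)| ≤ ‖a‖ * ‖G v‖ := abs_real_inner_le_norm _ _
    have ha2 : |(⟪a, G v⟫:ℝ)| * ι v ≤ ‖a‖ * ‖G v‖ * ι v :=
      mul_le_mul_of_nonneg_right ha1 (hιnonneg v)
    have ha3 : (0:ℝ) ≤ ‖a‖ * ι v := mul_nonneg (norm_nonneg a) (hιnonneg v)
    nlinarith [mul_nonneg ha3 (sq_nonneg (‖G v‖ - 1)), mul_nonneg ha3 (norm_nonneg (G v))]
  have ibp := integral_mul_fderiv_eq_neg_fderiv_mul_of_integrable h1 h2 h3 (fun v _ => hfdiff v) (fun v _ => hιdiff v)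
  have lhs_eq : ∫ v, (⟪a, G v⟫:ℝ) * fderiv ℝ ι v b
      = -∫ v, (⟪a, G v⟫:ℝ) * (⟪b, G v⟫:ℝ) * ι v := by
    rw [← integral_neg]
    congr 1
    funext v
    rw [hιform v]
    ring
  have rhs_eq : ∫ v, fderiv ℝ (fun w : E d => (⟪a, G w⟫:ℝ)) v b * ι v
      = ∫ v, (⟪a, fderiv ℝ G v b⟫:ℝ) * ι v := by
    congr 1
    funext v
    rw [hfform v]
  rw [lhs_eq, rhs_eq] at ibp
  have hkey : ∫ v, (⟪a, fderiv ℝ G v b⟫:ℝ) * ι v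
      = ∫ v, (⟪a, G v⟫:ℝ) * (⟪b, G v⟫:ℝ) * ι v := by linarith
  -- second moments
  haveI : Nontrivial (E d) := by
    refine ⟨⟨EuclideanSpace.single ⟨0,hd⟩ (1:ℝ), 0, fun h => ?_⟩⟩
    have h0 := congrArg (fun w : E d => w ⟨0,hd⟩) h
    simp [EuclideanSpace.single_apply] at h0
  set f : ℝ → ℝ := fun r => (2 * dψ (r ^ 2)) ^ 2 * Real.exp (-ψ (r ^ 2)) with hfdef
  have hsmulc : ∀ (v : E d) (i : Fin d), G v i = 2 * dψ (‖v‖ ^ 2) * v i := by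
    intro v i
    rw [hGdef]
    simp
  have hpt : ∀ (v : E d) (i j : Fin d), G v i * G v j * ι v = v i * v j * f ‖v‖ := by
    intro v i j
    rw [hsmulc v i, hsmulc v j, hfdef, hιdef, hΨdef]
    ring
  have hdiageq : ∀ i j : Fin d, (∫ v, G v i * G v i * ι v) = ∫ v, G v j * G v j * ι v := by
    intro i j
    have h1 : ∀ k : Fin d, (∫ v, G v k * G v k * ι v) = ∫ v : E d, (v k)^2 * f ‖v‖ := by
      intro k
      congr 1
      funext v
      rw [hpt v k k]
      ring
    rw [h1 i, h1 j, integral_coord_sq_radial f i j]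
  have hsum : ∑ k : Fin d, (∫ v, G v k * G v k * ι v) = ∫ v, ‖G v‖^2 * ι v := by
    rw [← integral_finset_sum _ (fun k _ => hTint k k)]
    congr 1
    funext v
    have h1 : ∑ k, G v k * G v k * ι v = (∑ k, (G v k)^2) * ι v := by
      rw [Finset.sum_mul]
      exact Finset.sum_congr rfl (fun k _ => by ring)
    rw [h1, euclid_norm_sq_eq_sum]
  have hJ : ∫ v, ‖G v‖^2 * ι v = (d:ℝ) * (ω * (2 * K)) := by
    have hpt2 : ∀ v : E d, ‖G v‖^2 * ι v = ‖v‖^2 * f ‖v‖ := by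
      intro v
      rw [hGdef, hιdef, hΨdef, hfdef]
      simp only [norm_smul, Real.norm_eq_abs, mul_pow, sq_abs]
      ring
    have hstep : ∫ v, ‖G v‖^2 * ι v = ∫ v : E d, ‖v‖^2 * f ‖v‖ := by
      congr 1
      funext v
      exact hpt2 v
    rw [hstep]
    have hpolar := integral_fun_norm_addHaar (volume : Measure (E d)) (fun r : ℝ => r^2 * f r)
    simp only [finrank_euclideanSpace_fin] at hpolar
    rw [hpolar]
    have hsub : ∫ r in Ioi (0:ℝ), r ^ (d - 1) • (r^2 * f r) = 2 * K := by
      have hrpow := integral_comp_rpow_Ioi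
        (fun u => u ^ ((d:ℝ)/2) * dψ u ^ 2 * Real.exp (-ψ u)) (p := 2) two_ne_zero
      have hcong : ∫ r in Ioi (0:ℝ), r ^ (d - 1) • (r^2 * f r)
          = ∫ r in Ioi (0:ℝ), 2 * ((|(2:ℝ)| * r ^ ((2:ℝ)-1)) •
              ((r ^ (2:ℝ)) ^ ((d:ℝ)/2) * dψ (r ^ (2:ℝ)) ^ 2 * Real.exp (-ψ (r ^ (2:ℝ))))) := by
        apply setIntegral_congr_fun measurableSet_Ioi
        intro r hr
        beta_reduce
        have hr0 : (0:ℝ) < r := hr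
        have h2 : r ^ (2:ℝ) = r ^ 2 := by
          rw [show ((2:ℝ)) = ((2:ℕ):ℝ) by norm_num, Real.rpow_natCast]
        have h3 : ((r ^ 2 : ℝ)) ^ ((d:ℝ)/2) = r ^ d := by
          rw [← h2, ← Real.rpow_mul hr0.le]
          rw [show (2:ℝ) * ((d:ℝ)/2) = (d:ℝ) by ring, Real.rpow_natCast]
        have h21 : r ^ ((2:ℝ)-1) = r := by
          rw [show ((2:ℝ)-1) = (1:ℝ) by norm_num, Real.rpow_one]
        have hpow : r ^ (d-1) * r ^ 2 = r * r ^ d := by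
          rw [← pow_add, ← pow_succ']
          congr 1
          omega
        rw [h2, h3, h21, hfdef]
        simp only [smul_eq_mul, abs_two]
        linear_combination (4 * dψ (r^2)^2 * Real.exp (-ψ (r^2))) * hpow
      rw [hcong, integral_const_mul, hrpow, ← hKdef]
    rw [hsub, nsmul_eq_mul, smul_eq_mul, measureReal_def, ← hωdef]
  have hTdiag : ∀ i : Fin d, (∫ v, G v i * G v i * ι v) = 2 * (ω * K) := by
    intro i
    have h1 : ∑ k : Fin d, (∫ v, G v k * G v k * ι v)
        = (d:ℝ) * ∫ v, G v i * G v i * ι v := by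
      rw [Finset.sum_congr rfl (fun k _ => hdiageq k i)]
      simp [Finset.sum_const, Finset.card_univ, nsmul_eq_mul]
    have h2 : (d:ℝ) * (∫ v, G v i * G v i * ι v) = (d:ℝ) * (ω * (2 * K)) := by
      rw [← h1, hsum, hJ]
    have hdne : (d:ℝ) ≠ 0 := by positivity
    have h3 := mul_left_cancel₀ hdne h2
    linarith [h3]
  have hT : ∀ i j : Fin d, (∫ v, G v i * G v j * ι v)
      = if i = j then 2 * (ω * K) else 0 := by
    intro i j
    by_cases hij : i = j
    · subst hij
      rw [if_pos rfl]
      exact hTdiag i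
    · rw [if_neg hij]
      have hstep : ∫ v, G v i * G v j * ι v = ∫ v : E d, v i * v j * f ‖v‖ := by
        congr 1
        funext v
        exact hpt v i j
      rw [hstep]
      exact integral_coord_mul_coord_radial f hij
  -- expansion identities
  have hI1 : ∫ v, (⟪G v, H (G v)⟫:ℝ) * ι v = 2 * (ω * K) * lapl d g x := by
    have hpt1 : ∀ v, (⟪G v, H (G v)⟫:ℝ) * ι v
        = ∑ j, ∑ i, H (EuclideanSpace.single j 1) i * (G v i * G v j * ι v) := by
      intro v
      rw [inner_clm_expand H (G v), Finset.sum_mul]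
      refine Finset.sum_congr rfl fun j _ => ?_
      rw [Finset.sum_mul]
      exact Finset.sum_congr rfl fun i _ => by ring
    have hstep : ∫ v, (⟪G v, H (G v)⟫:ℝ) * ι v
        = ∑ j, ∑ i, H (EuclideanSpace.single j 1) i * ∫ v, G v i * G v j * ι v := by
      rw [show (fun v => (⟪G v, H (G v)⟫:ℝ) * ι v)
          = fun v => ∑ j, ∑ i, H (EuclideanSpace.single j 1) i * (G v i * G v j * ι v)
          from funext hpt1]
      rw [integral_finset_sum _ (fun j _ =>
        integrable_finset_sum _ (fun i _ => (hTint i j).const_mul _))]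
      refine Finset.sum_congr rfl fun j _ => ?_
      rw [integral_finset_sum _ (fun i _ => (hTint i j).const_mul _)]
      exact Finset.sum_congr rfl fun i _ => integral_const_mul _ _
    rw [hstep]
    simp only [hT, mul_ite, mul_zero]
    simp only [Finset.sum_ite_eq', Finset.sum_ite_eq, Finset.mem_univ, if_true]
    rw [lapl, ← hHdef, Finset.mul_sum]
    refine Finset.sum_congr rfl fun j _ => ?_
    simp only [EuclideanSpace.inner_single_right, conj_trivial, one_mul]
    ring
  have hI2 : ∫ v, (⟪a, G v⟫:ℝ) * (⟪b, G v⟫:ℝ) * ι v = 2 * (ω * K) * ⟪a, b⟫ := by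
    have hpt2 : ∀ v, (⟪a, G v⟫:ℝ) * (⟪b, G v⟫:ℝ) * ι v
        = ∑ i, ∑ j, (a i * b j) * (G v i * G v j * ι v) := by
      intro v
      rw [euclid_inner_eq_sum a (G v), euclid_inner_eq_sum b (G v), Finset.sum_mul_sum,
        Finset.sum_mul]
      refine Finset.sum_congr rfl fun i _ => ?_
      rw [Finset.sum_mul]
      exact Finset.sum_congr rfl fun j _ => by ring
    have hstep : ∫ v, (⟪a, G v⟫:ℝ) * (⟪b, G v⟫:ℝ) * ι v
        = ∑ i, ∑ j, (a i * b j) * ∫ v, G v i * G v j * ι v := by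
      rw [show (fun v => (⟪a, G v⟫:ℝ) * (⟪b, G v⟫:ℝ) * ι v)
          = fun v => ∑ i, ∑ j, (a i * b j) * (G v i * G v j * ι v)
          from funext hpt2]
      rw [integral_finset_sum _ (fun i _ =>
        integrable_finset_sum _ (fun j _ => (hTint i j).const_mul _))]
      refine Finset.sum_congr rfl fun i _ => ?_
      rw [integral_finset_sum _ (fun j _ => (hTint i j).const_mul _)]
      exact Finset.sum_congr rfl fun j _ => integral_const_mul _ _
    rw [hstep]
    simp only [hT, mul_ite, mul_zero]
    simp only [Finset.sum_ite_eq', Finset.sum_ite_eq, Finset.mem_univ, if_true]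
    rw [euclid_inner_eq_sum a b, Finset.mul_sum]
    exact Finset.sum_congr rfl fun i _ => by ring
  -- assembly
  rw [hconv]
  have hsplit : (fun v => (ι v / C) * ((⟪G v, H (G v)⟫:ℝ) - (⟪a, fderiv ℝ G v b⟫:ℝ)))
      = fun v => (1/C) * ((⟪G v, H (G v)⟫:ℝ) * ι v - (⟪a, fderiv ℝ G v b⟫:ℝ) * ι v) := by
    funext v; ring
  rw [hsplit, integral_const_mul, integral_sub hintA hintB, hkey, hI1, hI2]
  field_simp
end
end

section
/- Let ψ ∈ C²([0,∞);[0,∞)) and set Φ(v) := ψ(|v|²) for v ∈ ℝ^d. Assume C_Φ := ∫_{ℝ^d} e^{-Φ(v)} dv < ∞, ∫_{ℝ^d} (|∇Φ(v)|² + ‖∇²Φ(v)‖) μ₂(dv) < ∞, and lim_{|v|→∞} |∇(e^{-Φ})(v)| = 0. Then 2 ∫_{ℝ^d} ( (2/d) ψ''(|v|²)|v|² + ψ'(|v|²) ) μ₂(dv) = (4/d) ∫_{ℝ^d} ψ'(|v|²)² |v|² μ₂(dv) = (2 ω_d / C_Φ) ∫_0^∞ u^{d/2} ψ'(u)² e^{-ψ(u)}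 du, and this common value is finite, where ω_d is the volume of the unit ball in ℝ^d. -/
open MeasureTheory Real Filter Topology Set
open scoped RealInnerProductSpace ENNReal NNReal

noncomputable section

section AuxMeasure

lemma radial_integrableOn {d : ℕ} (hd : 0 < d) {f : ℝ → ℝ}
    (hf : Integrable (fun v : E d => f ‖v‖) volume) :
    IntegrableOn (fun r : ℝ => r ^ (d - 1) * f r) (Ioi 0) := by
  have : Nontrivial (E d) := by
    have : Module.finrank ℝ (E d) = d := finrank_euclideanSpace_fin
    exact Module.nontrivial_of_finrank_pos (by omega : 0 < Module.finrank ℝ (E d))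
  have hdim : Module.finrank ℝ (E d) = d := finrank_euclideanSpace_fin
  have h0 : IntegrableOn (fun v : E d => f ‖v‖) ({0}ᶜ) volume := hf.integrableOn
  have hemb : MeasurableEmbedding (Subtype.val : ({0}ᶜ : Set (E d)) → E d) :=
    MeasurableEmbedding.subtype_coe (measurableSet_singleton (0:E d)).compl
  have hmapcomap : ((volume : Measure (E d)).comap Subtype.val).map
      (Subtype.val : ({0}ᶜ : Set (E d)) → E d) = volume.restrict ({0}ᶜ) := by
    rw [hemb.map_comap, Subtype.range_coe]
  have h1 : Integrable (fun x : ({0}ᶜ : Set (E d)) => f ‖(x : E d)‖)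
      ((volume : Measure (E d)).comap Subtype.val) := by
    rw [show (fun x : ({0}ᶜ : Set (E d)) => f ‖(x : E d)‖)
        = (fun v : E d => f ‖v‖) ∘ Subtype.val from rfl, ← hemb.integrable_map_iff, hmapcomap]
    exact h0
  have hmp := (volume : Measure (E d)).measurePreserving_homeomorphUnitSphereProd
  have h2 : Integrable ((fun y : ℝ => f y) ∘ Subtype.val ∘ Prod.snd)
      ((volume : Measure (E d)).toSphere.prod (.volumeIoiPow (Module.finrank ℝ (E d) - 1))) := by
    rw [← hmp.integrable_comp_emb (Homeomorph.measurableEmbedding _)]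
    refine h1.congr (Eventually.of_forall fun x => ?_)
    simp
  have hsph : (volume : Measure (E d)).toSphere ≠ 0 := by
    intro h
    have := (volume : Measure (E d)).toSphere_apply_univ
    rw [h] at this
    simp only [Measure.coe_zero, Pi.zero_apply] at this
    have hb : volume (Metric.ball (0 : E d) 1) ≠ 0 :=
      (Metric.measure_ball_pos volume 0 one_pos).ne'
    rw [hdim] at this
    exact hb (by
      rcases mul_eq_zero.mp this.symm with h' | h'
      · exact absurd h' (by exact_mod_cast hd.ne')
      · exact h')
  have h3 : Integrable (fun y : (Ioi (0:ℝ)) => f y)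
      (Measure.volumeIoiPow (Module.finrank ℝ (E d) - 1)) := by
    have h2' := (integrable_prod_iff h2.aestronglyMeasurable).mp h2
    haveI : (ae ((volume : Measure (E d)).toSphere)).NeBot := ae_neBot.mpr hsph
    obtain ⟨x, hx⟩ := h2'.1.exists
    exact hx
  have h4 : Integrable (fun y : (Ioi (0:ℝ)) =>
      f y * (ENNReal.ofReal ((y : ℝ) ^ (d - 1))).toReal)
      ((volume : Measure ℝ).comap Subtype.val) := by
    rw [hdim] at h3
    have hmeas : Measurable fun y : (Ioi (0:ℝ)) => ENNReal.ofReal ((y : ℝ) ^ (d - 1)) :=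
      (measurable_subtype_coe.pow_const _).ennreal_ofReal
    exact (integrable_withDensity_iff hmeas
      (Eventually.of_forall fun y => ENNReal.ofReal_lt_top)).mp h3
  have hemb2 : MeasurableEmbedding (Subtype.val : (Ioi (0:ℝ)) → ℝ) :=
    MeasurableEmbedding.subtype_coe measurableSet_Ioi
  have h5 : IntegrableOn (fun r : ℝ => f r * (ENNReal.ofReal (r ^ (d - 1))).toReal) (Ioi 0) := by
    have : ((volume : Measure ℝ).comap Subtype.val).map (Subtype.val : (Ioi (0:ℝ)) → ℝ)
        = volume.restrict (Ioi 0) := by rw [hemb2.map_comap, Subtype.range_coe]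
    unfold IntegrableOn
    rw [← this, hemb2.integrable_map_iff]
    exact h4
  refine (integrableOn_congr_fun (fun r hr => ?_) measurableSet_Ioi).mp h5
  rw [ENNReal.toReal_ofReal (pow_nonneg (le_of_lt hr) _), mul_comm]

lemma radial_integral {d : ℕ} (hd : 0 < d) (f : ℝ → ℝ) :
    ∫ v : E d, f ‖v‖ = (d : ℝ) * (volume (Metric.ball (0 : E d) 1)).toReal
      * ∫ r in Ioi (0:ℝ), r ^ (d - 1) * f r := by
  have : Nontrivial (E d) :=
    Module.nontrivial_of_finrank_pos
      (by rw [finrank_euclideanSpace_fin]; omega : 0 < Module.finrank ℝ (E d))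
  have h := integral_fun_norm_addHaar (volume : Measure (E d)) f
  rw [finrank_euclideanSpace_fin] at h
  rw [h]
  simp only [nsmul_eq_mul, smul_eq_mul, mul_assoc]
  rfl

lemma withDensity_integral_eq {X : Type*} [MeasurableSpace X] (μ : Measure X) {ρ : X → ℝ}
    (hρ : Measurable ρ) (hρ0 : ∀ x, 0 ≤ ρ x) (g : X → ℝ) :
    ∫ x, g x ∂(μ.withDensity fun x => ENNReal.ofReal (ρ x)) = ∫ x, ρ x * g x ∂μ := by
  have h : (fun x => ENNReal.ofReal (ρ x)) = fun x => ((ρ x).toNNReal : ℝ≥0∞) := rfl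
  rw [h, integral_withDensity_eq_integral_smul hρ.real_toNNReal]
  congr 1; ext x
  simp [NNReal.smul_def, Real.coe_toNNReal _ (hρ0 x)]

lemma withDensity_integrable_iff {X : Type*} [MeasurableSpace X] (μ : Measure X) {ρ : X → ℝ}
    (hρ : Measurable ρ) (hρ0 : ∀ x, 0 ≤ ρ x) (g : X → ℝ) :
    Integrable g (μ.withDensity fun x => ENNReal.ofReal (ρ x))
      ↔ Integrable (fun x => ρ x * g x) μ := by
  rw [integrable_withDensity_iff (hρ.ennreal_ofReal)
    (Eventually.of_forall fun y => ENNReal.ofReal_lt_top)]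
  constructor <;> intro h <;> refine h.congr (Eventually.of_forall fun x => ?_) <;>
    simp [ENNReal.toReal_ofReal (hρ0 x), mul_comm]

end AuxMeasure

section AuxCont

lemma cont_comp_sq {X : Type*} [SeminormedAddCommGroup X] {h : ℝ → ℝ}
    (hh : ContinuousOn h (Ici 0)) : Continuous fun v : X => h (‖v‖ ^ 2) := by
  rw [← continuousOn_univ]
  exact hh.comp ((continuous_norm.pow 2).continuousOn)
    (fun v _ => pow_nonneg (norm_nonneg v) 2)

lemma cont_comp_sq' {h : ℝ → ℝ} (hh : ContinuousOn h (Ici 0)) :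
    Continuous fun r : ℝ => h (r ^ 2) := by
  rw [← continuousOn_univ]
  exact hh.comp ((continuous_id.pow 2).continuousOn) (fun r _ => sq_nonneg r)

end AuxCont

section AuxCalc

variable {ψ : ℝ → ℝ}

lemma psi1_contOn (hψ : ContDiffOn ℝ 2 ψ (Ici 0)) :
    ContinuousOn (derivWithin ψ (Ici 0)) (Ici 0) :=
  hψ.continuousOn_derivWithin (uniqueDiffOn_Ici 0) (by norm_num)

lemma psi1_contDiffOn (hψ : ContDiffOn ℝ 2 ψ (Ici 0)) :
    ContDiffOn ℝ 1 (derivWithin ψ (Ici 0)) (Ici 0) :=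
  hψ.derivWithin (uniqueDiffOn_Ici 0) (by norm_num)

lemma psi2_contOn (hψ : ContDiffOn ℝ 2 ψ (Ici 0)) :
    ContinuousOn (derivWithin (derivWithin ψ (Ici 0)) (Ici 0)) (Ici 0) :=
  (psi1_contDiffOn hψ).continuousOn_derivWithin (uniqueDiffOn_Ici 0) (by norm_num)

lemma psi_hasDerivAt (hψ : ContDiffOn ℝ 2 ψ (Ici 0)) {u : ℝ} (hu : 0 < u) :
    HasDerivAt ψ (derivWithin ψ (Ici 0) u) u := by
  have h1 : DifferentiableWithinAt ℝ ψ (Ici 0) u :=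
    (hψ.differentiableOn (by norm_num)) u (le_of_lt hu)
  exact h1.hasDerivWithinAt.hasDerivAt (Ici_mem_nhds hu)

lemma psi1_hasDerivAt (hψ : ContDiffOn ℝ 2 ψ (Ici 0)) {u : ℝ} (hu : 0 < u) :
    HasDerivAt (derivWithin ψ (Ici 0)) (derivWithin (derivWithin ψ (Ici 0)) (Ici 0) u) u := by
  have h1 : DifferentiableWithinAt ℝ (derivWithin ψ (Ici 0)) (Ici 0) u :=
    ((psi1_contDiffOn hψ).differentiableOn (by norm_num)) u (le_of_lt hu)
  exact h1.hasDerivWithinAt.hasDerivAt (Ici_mem_nhds hu)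

lemma grad_formula {d : ℕ} (hψ : ContDiffOn ℝ 2 ψ (Ici 0)) {v : E d} (hv : v ≠ 0) :
    HasGradientAt (fun w : E d => ψ (‖w‖ ^ 2))
      ((2 * derivWithin ψ (Ici 0) (‖v‖ ^ 2)) • v) v := by
  have hu : (0:ℝ) < ‖v‖ ^ 2 := pow_pos (norm_pos_iff.mpr hv) 2
  have h1 : HasFDerivAt (fun w : E d => ‖w‖ ^ 2) (2 • (innerSL ℝ v)) v :=
    (hasStrictFDerivAt_norm_sq v).hasFDerivAt
  have h2 := (psi_hasDerivAt hψ hu).comp_hasFDerivAt v h1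
  rw [hasGradientAt_iff_hasFDerivAt]
  refine h2.congr_fderiv ?_
  ext w
  simp only [InnerProductSpace.toDual_apply_apply, ContinuousLinearMap.coe_smul', Pi.smul_apply,
    ContinuousLinearMap.smul_apply, innerSL_apply_apply, real_inner_smul_left, smul_eq_mul]
  ring

lemma hess_formula {d : ℕ} (hψ : ContDiffOn ℝ 2 ψ (Ici 0)) {v : E d} (hv : v ≠ 0) :
    HasFDerivAt (fun w : E d => (2 * derivWithin ψ (Ici 0) (‖w‖ ^ 2)) • w)
      (((4 * derivWithin (derivWithin ψ (Ici 0)) (Ici 0) (‖v‖ ^ 2)) • (innerSL ℝ v)).smulRight v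
        + (2 * derivWithin ψ (Ici 0) (‖v‖ ^ 2)) • ContinuousLinearMap.id ℝ (E d)) v := by
  have hu : (0:ℝ) < ‖v‖ ^ 2 := pow_pos (norm_pos_iff.mpr hv) 2
  have h1 : HasFDerivAt (fun w : E d => ‖w‖ ^ 2) (2 • (innerSL ℝ v)) v :=
    (hasStrictFDerivAt_norm_sq v).hasFDerivAt
  have h2 : HasFDerivAt (fun w : E d => 2 * derivWithin ψ (Ici 0) (‖w‖ ^ 2))
      ((4 * derivWithin (derivWithin ψ (Ici 0)) (Ici 0) (‖v‖ ^ 2)) • (innerSL ℝ v)) v := by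
    have h3 := ((psi1_hasDerivAt hψ hu).comp_hasFDerivAt v h1).const_mul (2:ℝ)
    refine h3.congr_fderiv ?_
    ext w
    simp only [ContinuousLinearMap.coe_smul', Pi.smul_apply, innerSL_apply_apply, smul_eq_mul,
      ContinuousLinearMap.smul_apply]
    ring
  have h4 := h2.smul (hasFDerivAt_id v)
  rw [add_comm]
  exact h4

lemma F_hasDerivAt (hψ : ContDiffOn ℝ 2 ψ (Ici 0)) (m : ℕ) {r : ℝ} (hr : 0 < r) :
    HasDerivAt (fun r : ℝ => 2 * r ^ (m+1) * derivWithin ψ (Ici 0) (r ^ 2)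
        * Real.exp (-(ψ (r ^ 2))))
      (2 * ((m:ℝ)+1) * (r ^ m * (Real.exp (-(ψ (r ^ 2)))
          * ((2/((m:ℝ)+1)) * derivWithin (derivWithin ψ (Ici 0)) (Ici 0) (r ^ 2) * r ^ 2
            + derivWithin ψ (Ici 0) (r ^ 2))))
        - 4 * (r ^ m * (Real.exp (-(ψ (r ^ 2)))
          * ((derivWithin ψ (Ici 0) (r ^ 2)) ^ 2 * r ^ 2)))) r := by
  have hu : (0:ℝ) < r ^ 2 := by positivity
  have hsq : HasDerivAt (fun r : ℝ => r ^ 2) (2 * r) r := by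
    simpa using hasDerivAt_pow 2 r
  have hψ1r : HasDerivAt (fun r : ℝ => derivWithin ψ (Ici 0) (r ^ 2))
      (derivWithin (derivWithin ψ (Ici 0)) (Ici 0) (r ^ 2) * (2 * r)) r :=
    HasDerivAt.comp (h₂ := derivWithin ψ (Ici 0)) (h := fun r : ℝ => r ^ 2) r
      (psi1_hasDerivAt hψ hu) hsq
  have hψr : HasDerivAt (fun r : ℝ => ψ (r ^ 2))
      (derivWithin ψ (Ici 0) (r ^ 2) * (2 * r)) r :=
    HasDerivAt.comp (h₂ := ψ) (h := fun r : ℝ => r ^ 2) r (psi_hasDerivAt hψ hu) hsq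
  have hexp : HasDerivAt (fun r : ℝ => Real.exp (-(ψ (r ^ 2))))
      (Real.exp (-(ψ (r ^ 2))) * -(derivWithin ψ (Ici 0) (r ^ 2) * (2 * r))) r :=
    hψr.neg.exp
  have hpow : HasDerivAt (fun r : ℝ => 2 * r ^ (m+1)) (2 * (((m:ℕ)+1 : ℕ) * r ^ m)) r := by
    have := (hasDerivAt_pow (m+1) r).const_mul (2:ℝ)
    simpa using this
  have big := (hpow.mul hψ1r).mul hexp
  refine big.congr_deriv ?_
  have hm1 : ((m:ℝ) + 1) ≠ 0 := by positivity
  simp only [Pi.mul_apply, Nat.cast_add, Nat.cast_one]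
  field_simp
  ring

end AuxCalc

section AuxOp

lemma opnorm_bound1 {d : ℕ} {v : E d} (hv : v ≠ 0) (a b : ℝ) :
    |a * ‖v‖ ^ 2 + b| ≤ ‖(a • innerSL ℝ v).smulRight v
      + b • ContinuousLinearMap.id ℝ (E d)‖ := by
  set T := (a • innerSL ℝ v).smulRight v + b • ContinuousLinearMap.id ℝ (E d) with hT
  have hTv : T v = (a * ‖v‖ ^ 2 + b) • v := by
    simp only [hT, ContinuousLinearMap.add_apply, ContinuousLinearMap.smulRight_apply,
      ContinuousLinearMap.smul_apply, innerSL_apply_apply, ContinuousLinearMap.id_apply,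
      smul_eq_mul, real_inner_self_eq_norm_sq]
    rw [add_smul]
  have h := T.le_opNorm v
  rw [hTv, norm_smul, Real.norm_eq_abs] at h
  exact le_of_mul_le_mul_right h (norm_pos_iff.mpr hv)

lemma opnorm_bound2 {d : ℕ} (hd2 : 2 ≤ d) {v : E d} (hv : v ≠ 0) (a b : ℝ) :
    |b| ≤ ‖(a • innerSL ℝ v).smulRight v + b • ContinuousLinearMap.id ℝ (E d)‖ := by
  set T := (a • innerSL ℝ v).smulRight v + b • ContinuousLinearMap.id ℝ (E d) with hT
  have hne : (ℝ ∙ v)ᗮ ≠ ⊥ := by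
    intro h
    have htop : (ℝ ∙ v) = ⊤ := by
      rwa [Submodule.orthogonal_eq_bot_iff] at h
    have h1 : Module.finrank ℝ (ℝ ∙ v) = 1 := finrank_span_singleton hv
    have h2 : Module.finrank ℝ (E d) = d := finrank_euclideanSpace_fin
    rw [htop, finrank_top, h2] at h1
    omega
  obtain ⟨w0, hw0mem, hw0⟩ := Submodule.ne_bot_iff _ |>.mp hne
  set w : E d := ‖w0‖⁻¹ • w0 with hw
  have hworth : ⟪v, w⟫ = 0 := by
    have := (Submodule.mem_orthogonal (ℝ ∙ v) w0).mp hw0mem v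
      (Submodule.mem_span_singleton_self v)
    rw [hw, real_inner_smul_right, this, mul_zero]
  have hwnorm : ‖w‖ = 1 := norm_smul_inv_norm hw0
  have hTw : T w = b • w := by
    simp only [hT, ContinuousLinearMap.add_apply, ContinuousLinearMap.smulRight_apply,
      ContinuousLinearMap.smul_apply, innerSL_apply_apply, ContinuousLinearMap.id_apply,
      smul_eq_mul, hworth, mul_zero, zero_smul, zero_add]
  have h := T.le_opNorm w
  rw [hTw, norm_smul, Real.norm_eq_abs, hwnorm, mul_one, mul_one] at h
  exact h

end AuxOp

set_option maxHeartbeats 1000000 in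
/-- The moment identities for radial `Φ(v) = ψ(|v|²)`:
`2 ∫ ((2/d) ψ''(|v|²)|v|² + ψ'(|v|²)) dμ₂ = (4/d) ∫ ψ'(|v|²)²|v|² dμ₂
  = (2 ω_d / C_Φ) ∫_0^∞ u^{d/2} ψ'(u)² e^{-ψ(u)} du`, and the common value is finite. -/
theorem statement4
    (d : ℕ) (hd : 0 < d)
    (ψ : ℝ → ℝ) (hψ : ContDiffOn ℝ 2 ψ (Ici 0)) (hψ0 : ∀ r ∈ Ici (0 : ℝ), 0 ≤ ψ r)
    (Φ : E d → ℝ) (hΦdef : ∀ v, Φ v = ψ (‖v‖ ^ 2))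
    (hCΦ : Integrable fun v : E d => Real.exp (-(Φ v)))
    (hmom : Integrable (fun v : E d => ‖gradient Φ v‖ ^ 2 + ‖fderiv ℝ (gradient Φ) v‖)
      (mu2 d Φ))
    (hdecay : Tendsto (fun v : E d => ‖gradient (fun w => Real.exp (-(Φ w))) v‖)
      (Bornology.cobounded (E d)) (𝓝 0)) :
    Integrable (fun v : E d =>
        (2 / (d : ℝ)) * derivWithin (derivWithin ψ (Ici 0)) (Ici 0) (‖v‖ ^ 2) * ‖v‖ ^ 2
          + derivWithin ψ (Ici 0) (‖v‖ ^ 2)) (mu2 d Φ)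
    ∧ Integrable (fun v : E d => (derivWithin ψ (Ici 0) (‖v‖ ^ 2)) ^ 2 * ‖v‖ ^ 2) (mu2 d Φ)
    ∧ IntegrableOn
        (fun u => u ^ ((d : ℝ) / 2) * (derivWithin ψ (Ici 0) u) ^ 2 * Real.exp (-(ψ u)))
        (Ioi 0)
    ∧ 2 * ∫ v, ((2 / (d : ℝ)) * derivWithin (derivWithin ψ (Ici 0)) (Ici 0) (‖v‖ ^ 2) * ‖v‖ ^ 2
            + derivWithin ψ (Ici 0) (‖v‖ ^ 2)) ∂(mu2 d Φ)
        = (4 / (d : ℝ)) * ∫ v, (derivWithin ψ (Ici 0) (‖v‖ ^ 2)) ^ 2 * ‖v‖ ^ 2 ∂(mu2 d Φ)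
    ∧ (4 / (d : ℝ)) * ∫ v, (derivWithin ψ (Ici 0) (‖v‖ ^ 2)) ^ 2 * ‖v‖ ^ 2 ∂(mu2 d Φ)
        = (2 * (volume (Metric.ball (0 : E d) 1)).toReal / ∫ v : E d, Real.exp (-(Φ v)))
            * ∫ u in Ioi (0 : ℝ),
                u ^ ((d : ℝ) / 2) * (derivWithin ψ (Ici 0) u) ^ 2 * Real.exp (-(ψ u)) := by
  obtain ⟨m, rfl⟩ : ∃ m, d = m + 1 := ⟨d - 1, (Nat.succ_pred_eq_of_pos hd).symm⟩
  have hΦfun : Φ = fun v => ψ (‖v‖ ^ 2) := funext hΦdef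
  haveI hnt : Nontrivial (E (m+1)) :=
    Module.nontrivial_of_finrank_pos
      (by rw [finrank_euclideanSpace_fin]; omega : 0 < Module.finrank ℝ (E (m+1)))
  -- abbreviations
  set ψ₁ : ℝ → ℝ := derivWithin ψ (Ici 0) with hψ₁def
  set ψ₂ : ℝ → ℝ := derivWithin ψ₁ (Ici 0) with hψ₂def
  set C := ∫ w : E (m+1), Real.exp (-(Φ w)) with hCdef
  set ω := (volume (Metric.ball (0 : E (m+1)) 1)).toReal with hωdef
  have hdm : ((m:ℝ) + 1) ≠ 0 := by positivity
  have hdcast : ((m+1 : ℕ) : ℝ) = (m:ℝ) + 1 := by push_cast; ring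
  -- positivity of constants
  have hCpos : 0 < C := by
    rw [hCdef, integral_pos_iff_support_of_nonneg (fun v => (Real.exp_pos _).le) hCΦ]
    have hsupp : (Function.support fun v : E (m+1) => Real.exp (-(Φ v))) = univ := by
      ext v; simp [(Real.exp_pos (-(Φ v))).ne']
    rw [hsupp]
    calc (0:ℝ≥0∞) < volume (Metric.ball (0:E (m+1)) 1) := Metric.measure_ball_pos _ _ one_pos
      _ ≤ volume univ := measure_mono (subset_univ _)
  have hωpos : 0 < ω :=
    ENNReal.toReal_pos (Metric.measure_ball_pos _ _ one_pos).ne' measure_ball_lt_top.ne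
  -- continuity facts
  have hΦcont : Continuous Φ := by rw [hΦfun]; exact cont_comp_sq hψ.continuousOn
  have hc1 : Continuous fun v : E (m+1) => ψ₁ (‖v‖ ^ 2) := cont_comp_sq (psi1_contOn hψ)
  have hc2 : Continuous fun v : E (m+1) => ψ₂ (‖v‖ ^ 2) := cont_comp_sq (psi2_contOn hψ)
  have hc1' : Continuous fun r : ℝ => ψ₁ (r ^ 2) := cont_comp_sq' (psi1_contOn hψ)
  have hc2' : Continuous fun r : ℝ => ψ₂ (r ^ 2) := cont_comp_sq' (psi2_contOn hψ)
  have hcψ' : Continuous fun r : ℝ => ψ (r ^ 2) := cont_comp_sq' hψ.continuousOn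
  have hcexp' : Continuous fun r : ℝ => Real.exp (-(ψ (r ^ 2))) :=
    Real.continuous_exp.comp hcψ'.neg
  -- density facts
  have hρmeas : Measurable fun v : E (m+1) => Real.exp (-(Φ v)) / C :=
    ((Real.continuous_exp.comp hΦcont.neg).div_const C).measurable
  have hρ0 : ∀ v : E (m+1), 0 ≤ Real.exp (-(Φ v)) / C :=
    fun v => div_nonneg (Real.exp_pos _).le hCpos.le
  have hmu2eq : mu2 (m+1) Φ
      = volume.withDensity fun v => ENNReal.ofReal (Real.exp (-(Φ v)) / C) := by
    rw [mu2, hCdef]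
  have hconv : ∀ g : E (m+1) → ℝ,
      Integrable g (mu2 (m+1) Φ) ↔ Integrable (fun v => Real.exp (-(Φ v)) * g v) volume := by
    intro g
    rw [hmu2eq, withDensity_integrable_iff volume hρmeas hρ0 g]
    constructor
    · intro h
      refine (h.const_mul C).congr (Eventually.of_forall fun v => ?_)
      field_simp
    · intro h
      refine (h.const_mul (1/C)).congr (Eventually.of_forall fun v => ?_)
      field_simp
  have hconvint : ∀ g : E (m+1) → ℝ,
      ∫ v, g v ∂(mu2 (m+1) Φ) = (1/C) * ∫ v, Real.exp (-(Φ v)) * g v := by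
    intro g
    rw [hmu2eq, withDensity_integral_eq volume hρmeas hρ0 g, ← integral_const_mul]
    congr 1; funext v; ring
  -- gradient and Hessian formulas
  have hgrad : ∀ v : E (m+1), v ≠ 0 → gradient Φ v = (2 * ψ₁ (‖v‖ ^ 2)) • v := by
    intro v hv
    rw [hΦfun]
    exact (grad_formula hψ hv).gradient
  have hgradnorm : ∀ v : E (m+1), v ≠ 0 →
      ‖gradient Φ v‖ ^ 2 = 4 * (ψ₁ (‖v‖ ^ 2)) ^ 2 * ‖v‖ ^ 2 := by
    intro v hv
    rw [hgrad v hv, norm_smul, mul_pow, Real.norm_eq_abs, sq_abs]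
    ring
  have hhess : ∀ v : E (m+1), v ≠ 0 → fderiv ℝ (gradient Φ) v =
      ((4 * ψ₂ (‖v‖ ^ 2)) • innerSL ℝ v).smulRight v
        + (2 * ψ₁ (‖v‖ ^ 2)) • ContinuousLinearMap.id ℝ (E (m+1)) := by
    intro v hv
    have h1 := hess_formula (d := m+1) hψ hv
    have h2 : HasFDerivAt (gradient Φ)
        (((4 * ψ₂ (‖v‖ ^ 2)) • innerSL ℝ v).smulRight v
          + (2 * ψ₁ (‖v‖ ^ 2)) • ContinuousLinearMap.id ℝ (E (m+1))) v := by
      apply h1.congr_of_eventuallyEq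
      have hop : ∀ᶠ w in 𝓝 v, w ∈ ({(0:E (m+1))}ᶜ : Set (E (m+1))) :=
        isOpen_compl_singleton.eventually_mem (by simpa using hv)
      filter_upwards [hop] with w hw
      exact hgrad w (by simpa using hw)
    exact h2.fderiv
  -- pointwise bounds
  have hg1bound : ∀ v : E (m+1), v ≠ 0 →
      |(2/((m+1 : ℕ):ℝ)) * ψ₂ (‖v‖ ^ 2) * ‖v‖ ^ 2 + ψ₁ (‖v‖ ^ 2)|
        ≤ ‖fderiv ℝ (gradient Φ) v‖ := by
    intro v hv
    have hX : |(4 * ψ₂ (‖v‖ ^ 2)) * ‖v‖ ^ 2 + 2 * ψ₁ (‖v‖ ^ 2)|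
        ≤ ‖fderiv ℝ (gradient Φ) v‖ := by
      rw [hhess v hv]
      exact opnorm_bound1 hv _ _
    have hY : (m:ℝ) * |2 * ψ₁ (‖v‖ ^ 2)| ≤ (m:ℝ) * ‖fderiv ℝ (gradient Φ) v‖ := by
      rcases Nat.eq_zero_or_pos m with hm | hm
      · simp [hm]
      · refine mul_le_mul_of_nonneg_left ?_ (Nat.cast_nonneg m)
        rw [hhess v hv]
        exact opnorm_bound2 (by omega) hv _ _
    have e1 : (2*((m:ℝ)+1)) * ((2/((m+1 : ℕ):ℝ)) * ψ₂ (‖v‖ ^ 2) * ‖v‖ ^ 2 + ψ₁ (‖v‖ ^ 2))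
        = ((4 * ψ₂ (‖v‖ ^ 2)) * ‖v‖ ^ 2 + 2 * ψ₁ (‖v‖ ^ 2))
          + (m:ℝ) * (2 * ψ₁ (‖v‖ ^ 2)) := by
      rw [hdcast]; field_simp; ring
    have key : (2*((m:ℝ)+1)) * |(2/((m+1 : ℕ):ℝ)) * ψ₂ (‖v‖ ^ 2) * ‖v‖ ^ 2 + ψ₁ (‖v‖ ^ 2)|
        ≤ (2*((m:ℝ)+1)) * ‖fderiv ℝ (gradient Φ) v‖ := by
      calc (2*((m:ℝ)+1)) * |(2/((m+1 : ℕ):ℝ)) * ψ₂ (‖v‖ ^ 2) * ‖v‖ ^ 2 + ψ₁ (‖v‖ ^ 2)|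
          = |(2*((m:ℝ)+1)) * ((2/((m+1 : ℕ):ℝ)) * ψ₂ (‖v‖ ^ 2) * ‖v‖ ^ 2 + ψ₁ (‖v‖ ^ 2))| := by
            rw [abs_mul, abs_of_nonneg (by positivity : (0:ℝ) ≤ 2*((m:ℝ)+1))]
        _ = |((4 * ψ₂ (‖v‖ ^ 2)) * ‖v‖ ^ 2 + 2 * ψ₁ (‖v‖ ^ 2))
              + (m:ℝ) * (2 * ψ₁ (‖v‖ ^ 2))| := by rw [e1]
        _ ≤ |(4 * ψ₂ (‖v‖ ^ 2)) * ‖v‖ ^ 2 + 2 * ψ₁ (‖v‖ ^ 2)|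
              + |(m:ℝ) * (2 * ψ₁ (‖v‖ ^ 2))| := abs_add_le _ _
        _ = |(4 * ψ₂ (‖v‖ ^ 2)) * ‖v‖ ^ 2 + 2 * ψ₁ (‖v‖ ^ 2)|
              + (m:ℝ) * |2 * ψ₁ (‖v‖ ^ 2)| := by
            rw [abs_mul, abs_of_nonneg (Nat.cast_nonneg m : (0:ℝ) ≤ (m:ℝ))]
        _ ≤ ‖fderiv ℝ (gradient Φ) v‖ + (m:ℝ) * ‖fderiv ℝ (gradient Φ) v‖ := add_le_add hX hY
        _ ≤ (2*((m:ℝ)+1)) * ‖fderiv ℝ (gradient Φ) v‖ := by nlinarith [norm_nonneg (fderiv ℝ (gradient Φ) v)]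
    exact le_of_mul_le_mul_left key (by positivity)
  -- a.e. nonzero
  have hae0 : ∀ᵐ v ∂(mu2 (m+1) Φ), v ≠ 0 := by
    have h0 : mu2 (m+1) Φ {(0 : E (m+1))} = 0 := by
      rw [hmu2eq]
      exact withDensity_absolutelyContinuous volume _ (measure_singleton 0)
    rw [ae_iff]
    convert h0 using 2
    ext v; simp
  -- conclusion 1 : integrability of the first integrand
  have hcontg1 : Continuous fun v : E (m+1) =>
      (2/((m+1 : ℕ):ℝ)) * ψ₂ (‖v‖ ^ 2) * ‖v‖ ^ 2 + ψ₁ (‖v‖ ^ 2) :=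
    (((continuous_const.mul hc2).mul (continuous_norm.pow 2))).add hc1
  have conclusion1 : Integrable (fun v : E (m+1) =>
      (2/((m+1 : ℕ):ℝ)) * ψ₂ (‖v‖ ^ 2) * ‖v‖ ^ 2 + ψ₁ (‖v‖ ^ 2)) (mu2 (m+1) Φ) := by
    refine hmom.mono' hcontg1.aestronglyMeasurable ?_
    filter_upwards [hae0] with v hv
    rw [Real.norm_eq_abs]
    exact (hg1bound v hv).trans (le_add_of_nonneg_left (sq_nonneg _))
  have hcontg2 : Continuous fun v : E (m+1) => (ψ₁ (‖v‖ ^ 2)) ^ 2 * ‖v‖ ^ 2 :=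
    (hc1.pow 2).mul (continuous_norm.pow 2)
  have conclusion2 : Integrable (fun v : E (m+1) => (ψ₁ (‖v‖ ^ 2)) ^ 2 * ‖v‖ ^ 2)
      (mu2 (m+1) Φ) := by
    refine hmom.mono' hcontg2.aestronglyMeasurable ?_
    filter_upwards [hae0] with v hv
    rw [Real.norm_eq_abs, abs_of_nonneg (by positivity)]
    have h1 := hgradnorm v hv
    nlinarith [norm_nonneg (fderiv ℝ (gradient Φ) v),
      mul_nonneg (sq_nonneg (ψ₁ (‖v‖ ^ 2))) (sq_nonneg ‖v‖)]
  -- pass to 1D integrands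
  have hq1int : Integrable (fun v : E (m+1) => Real.exp (-(ψ (‖v‖ ^ 2)))
      * ((2/((m+1 : ℕ):ℝ)) * ψ₂ (‖v‖ ^ 2) * ‖v‖ ^ 2 + ψ₁ (‖v‖ ^ 2))) volume := by
    refine ((hconv _).mp conclusion1).congr (Eventually.of_forall fun v => ?_)
    simp only [hΦdef]
  have hq2int : Integrable (fun v : E (m+1) => Real.exp (-(ψ (‖v‖ ^ 2)))
      * ((ψ₁ (‖v‖ ^ 2)) ^ 2 * ‖v‖ ^ 2)) volume := by
    refine ((hconv _).mp conclusion2).congr (Eventually.of_forall fun v => ?_)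
    simp only [hΦdef]
  have hqJint : Integrable (fun v : E (m+1) => Real.exp (-(ψ (‖v‖ ^ 2)))) volume := by
    refine hCΦ.congr (Eventually.of_forall fun v => ?_)
    simp only [hΦdef]
  set q₁ : ℝ → ℝ := fun r => Real.exp (-(ψ (r ^ 2)))
      * ((2/((m+1 : ℕ):ℝ)) * ψ₂ (r ^ 2) * r ^ 2 + ψ₁ (r ^ 2)) with hq₁def
  set q₂ : ℝ → ℝ := fun r => Real.exp (-(ψ (r ^ 2))) * ((ψ₁ (r ^ 2)) ^ 2 * r ^ 2) with hq₂def
  set qJ : ℝ → ℝ := fun r => Real.exp (-(ψ (r ^ 2))) with hqJdef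
  have hA : IntegrableOn (fun r : ℝ => r ^ m * q₁ r) (Ioi 0) := by
    have := radial_integrableOn (d := m+1) (by omega) (f := q₁) (by exact hq1int)
    simpa using this
  have hB : IntegrableOn (fun r : ℝ => r ^ m * q₂ r) (Ioi 0) := by
    have := radial_integrableOn (d := m+1) (by omega) (f := q₂) (by exact hq2int)
    simpa using this
  have hJ : IntegrableOn (fun r : ℝ => r ^ m * qJ r) (Ioi 0) := by
    have := radial_integrableOn (d := m+1) (by omega) (f := qJ) (by exact hqJint)
    simpa using this
  -- FTC
  have hF' : ∀ r : ℝ, 0 < r → HasDerivAt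
      (fun r : ℝ => 2 * r ^ (m+1) * ψ₁ (r ^ 2) * Real.exp (-(ψ (r ^ 2))))
      (2 * ((m:ℝ)+1) * (r ^ m * q₁ r) - 4 * (r ^ m * q₂ r)) r := by
    intro r hr
    have h := F_hasDerivAt hψ m hr
    convert h using 1
    simp only [hq₁def, hq₂def, hdcast]
    rfl
  have hF'int : IntegrableOn
      (fun r => 2 * ((m:ℝ)+1) * (r ^ m * q₁ r) - 4 * (r ^ m * q₂ r)) (Ioi 0) :=
    (hA.const_mul _).sub (hB.const_mul _)
  have hFcont : Continuous (fun r : ℝ => 2 * r ^ (m+1) * ψ₁ (r ^ 2)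
      * Real.exp (-(ψ (r ^ 2)))) :=
    ((continuous_const.mul (continuous_pow (m+1))).mul hc1').mul hcexp'
  have hFTC : ∀ b : ℝ, 0 < b →
      2 * b ^ (m+1) * ψ₁ (b ^ 2) * Real.exp (-(ψ (b ^ 2)))
        = ∫ r in (0:ℝ)..b, (2 * ((m:ℝ)+1) * (r ^ m * q₁ r) - 4 * (r ^ m * q₂ r)) := by
    intro b hb
    have hint : IntervalIntegrable
        (fun r => 2 * ((m:ℝ)+1) * (r ^ m * q₁ r) - 4 * (r ^ m * q₂ r)) volume 0 b := by
      rw [intervalIntegrable_iff_integrableOn_Ioc_of_le hb.le]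
      exact hF'int.mono_set Ioc_subset_Ioi_self
    have h := intervalIntegral.integral_eq_sub_of_hasDerivAt_of_le hb.le
      hFcont.continuousOn (fun x hx => hF' x hx.1) hint
    rw [h]
    have h0 : (0:ℝ) ^ (m+1) = 0 := by simp
    rw [h0]
    ring
  set L := ∫ r in Ioi (0:ℝ), (2 * ((m:ℝ)+1) * (r ^ m * q₁ r) - 4 * (r ^ m * q₂ r)) with hLdef
  have hlim : Tendsto (fun b : ℝ => 2 * b ^ (m+1) * ψ₁ (b ^ 2) * Real.exp (-(ψ (b ^ 2))))
      atTop (𝓝 L) := by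
    have h1 := intervalIntegral_tendsto_integral_Ioi 0 hF'int tendsto_id
    refine h1.congr' ?_
    filter_upwards [eventually_gt_atTop (0:ℝ)] with b hb
    exact (hFTC b hb).symm
  have hL0 : L = 0 := by
    by_contra hL
    have habs := hlim.abs
    have hev : ∀ᶠ b in atTop,
        |L| / 2 ≤ |2 * b ^ (m+1) * ψ₁ (b ^ 2) * Real.exp (-(ψ (b ^ 2)))| :=
      habs.eventually (eventually_ge_nhds (by
        have := abs_pos.mpr hL; linarith))
    obtain ⟨R, hR⟩ := eventually_atTop.mp (hev.and (eventually_ge_atTop (1:ℝ)))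
    set R' := max R 1 with hR'def
    have hR'pos : (0:ℝ) < R' := lt_of_lt_of_le one_pos (le_max_right _ _)
    have hWint : IntegrableOn (fun r => 4 * (r ^ m * q₂ r) + r ^ m * qJ r) (Ici R') volume :=
      MeasureTheory.IntegrableOn.mono_set ((hB.const_mul 4).add hJ)
        (fun x hx => lt_of_lt_of_le hR'pos hx)
    have hlow : ∀ r ∈ Ici R', |L| ≤ 4 * (r ^ m * q₂ r) + r ^ m * qJ r := by
      intro r hr
      have hrR : R ≤ r := le_trans (le_max_left _ _) hr
      have hr1 : (1:ℝ) ≤ r := le_trans (le_max_right _ _) hr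
      have hr0 : (0:ℝ) < r := lt_of_lt_of_le one_pos hr1
      have hFb := (hR r hrR).1
      have hq2nn : 0 ≤ q₂ r := by simp only [hq₂def]; positivity
      have hqJnn : 0 ≤ qJ r := by simp only [hqJdef]; positivity
      have hrm : (0:ℝ) ≤ r ^ m := pow_nonneg hr0.le m
      have hBnn : 0 ≤ 4 * (r ^ m * q₂ r) := by
        have := mul_nonneg hrm hq2nn; linarith
      have hJnn : 0 ≤ r ^ m * qJ r := mul_nonneg hrm hqJnn
      have hsq : (2 * r ^ (m+1) * ψ₁ (r ^ 2) * Real.exp (-(ψ (r ^ 2)))) ^ 2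
          = (4 * (r ^ m * q₂ r)) * (r ^ m * qJ r) := by
        simp only [hq₂def, hqJdef]
        ring
      have habsF : |2 * r ^ (m+1) * ψ₁ (r ^ 2) * Real.exp (-(ψ (r ^ 2)))|
          = Real.sqrt (4 * (r ^ m * q₂ r)) * Real.sqrt (r ^ m * qJ r) := by
        rw [← Real.sqrt_sq_eq_abs, hsq, Real.sqrt_mul hBnn]
      have hamgm : 2 * |2 * r ^ (m+1) * ψ₁ (r ^ 2) * Real.exp (-(ψ (r ^ 2)))|
          ≤ 4 * (r ^ m * q₂ r) + r ^ m * qJ r := by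
        rw [habsF]
        nlinarith [sq_nonneg (Real.sqrt (4 * (r ^ m * q₂ r)) - Real.sqrt (r ^ m * qJ r)),
          Real.sq_sqrt hBnn, Real.sq_sqrt hJnn]
      linarith
    have hfin := hWint.measure_ge_lt_top (abs_pos.mpr hL)
    have htop : (volume.restrict (Ici R'))
        {x | |L| ≤ 4 * (x ^ m * q₂ x) + x ^ m * qJ x} = ⊤ := by
      refine top_le_iff.mp ?_
      calc (⊤:ℝ≥0∞) = volume (Ici R') := (Real.volume_Ici).symm
        _ = (volume.restrict (Ici R')) (Ici R') := (Measure.restrict_apply_self _ _).symm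
        _ ≤ _ := measure_mono hlow
    rw [htop] at hfin
    exact absurd hfin (lt_irrefl ⊤)
  have h0int : ∫ r in Ioi (0:ℝ),
      (2 * ((m:ℝ)+1) * (r ^ m * q₁ r) - 4 * (r ^ m * q₂ r)) = 0 := by
    rw [← hLdef]; exact hL0
  have hkey1 : 2 * ((m:ℝ)+1) * ∫ r in Ioi (0:ℝ), r ^ m * q₁ r
      = 4 * ∫ r in Ioi (0:ℝ), r ^ m * q₂ r := by
    rw [integral_sub (hA.const_mul _) (hB.const_mul _), integral_const_mul,
      integral_const_mul] at h0int
    linarith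
  -- polar coordinate expressions of the two integrals
  have hpolar1 : ∫ v, ((2/((m+1 : ℕ):ℝ)) * ψ₂ (‖v‖ ^ 2) * ‖v‖ ^ 2
        + ψ₁ (‖v‖ ^ 2)) ∂(mu2 (m+1) Φ)
      = (1/C) * (((m+1 : ℕ):ℝ) * ω * ∫ r in Ioi (0:ℝ), r ^ m * q₁ r) := by
    rw [hconvint]
    congr 1
    have h := radial_integral (d := m+1) (by omega) q₁
    simp only [Nat.add_sub_cancel] at h
    rw [← h]
    refine integral_congr_ae (Eventually.of_forall fun v => ?_)
    simp only [hq₁def, hΦdef]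
  have hpolar2 : ∫ v, ((ψ₁ (‖v‖ ^ 2)) ^ 2 * ‖v‖ ^ 2) ∂(mu2 (m+1) Φ)
      = (1/C) * (((m+1 : ℕ):ℝ) * ω * ∫ r in Ioi (0:ℝ), r ^ m * q₂ r) := by
    rw [hconvint]
    congr 1
    have h := radial_integral (d := m+1) (by omega) q₂
    simp only [Nat.add_sub_cancel] at h
    rw [← h]
    refine integral_congr_ae (Eventually.of_forall fun v => ?_)
    simp only [hq₂def, hΦdef]
  -- substitution u = r^2
  have hsubpt : ∀ x : ℝ, x ∈ Ioi (0:ℝ) →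
      (|(2:ℝ)| * x ^ ((2:ℝ) - 1)) • ((fun u : ℝ => u ^ (((m+1 : ℕ):ℝ)/2) * (ψ₁ u) ^ 2
          * Real.exp (-(ψ u))) (x ^ (2:ℝ)))
        = 2 * (x ^ m * q₂ x) := by
    intro x hx
    have hx0 : (0:ℝ) < x := hx
    have h2 : x ^ (2:ℝ) = x ^ (2:ℕ) := by
      rw [← Real.rpow_natCast x 2]; norm_num
    have h3 : ((x:ℝ) ^ (2:ℕ)) ^ (((m+1 : ℕ):ℝ)/2) = x ^ (m+1 : ℕ) := by
      rw [← Real.rpow_natCast x 2, ← Real.rpow_mul hx0.le, ← Real.rpow_natCast x (m+1)]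
      congr 1
      push_cast
      ring
    have h1 : ((2:ℝ) - 1) = 1 := by norm_num
    simp only [smul_eq_mul, h2, h3, hq₂def, h1, Real.rpow_one, abs_two]
    ring
  have conclusion3 : IntegrableOn
      (fun u : ℝ => u ^ (((m+1 : ℕ):ℝ)/2) * (ψ₁ u) ^ 2 * Real.exp (-(ψ u))) (Ioi 0) := by
    refine (integrableOn_Ioi_comp_rpow_iff _ (p := 2) two_ne_zero).mp ?_
    refine (integrableOn_congr_fun (fun x hx => hsubpt x hx) measurableSet_Ioi).mpr
      (hB.const_mul 2)
  have hsubint : ∫ u in Ioi (0:ℝ), u ^ (((m+1 : ℕ):ℝ)/2) * (ψ₁ u) ^ 2 * Real.exp (-(ψ u))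
      = 2 * ∫ r in Ioi (0:ℝ), r ^ m * q₂ r := by
    rw [← integral_comp_rpow_Ioi (fun u : ℝ => u ^ (((m+1 : ℕ):ℝ)/2) * (ψ₁ u) ^ 2
        * Real.exp (-(ψ u))) (p := 2) two_ne_zero, ← integral_const_mul]
    exact setIntegral_congr_fun measurableSet_Ioi (fun x hx => hsubpt x hx)
  refine ⟨conclusion1, conclusion2, conclusion3, ?_, ?_⟩
  · rw [hpolar1, hpolar2, hdcast]
    field_simp
    linear_combination hkey1
  · rw [hpolar2, hsubint, hdcast]
    field_simp
    ring
end
end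

section
/- Let α ∈ (0,2) and let d be a positive integer. There exists a constant C = C(d,α) > 0 such that for every measurable radial nondecreasing Ψ : ℝ^d → [0,∞) with C_Ψ := ∫_{ℝ^d} e^{-Ψ(u)} du < ∞ and every v ∈ ℝ^d with |v| ≥ 2: ∫_{|u|≥1} e^{-Ψ(v−u)} |u|^{-(d+α−1)} du ≤ C [ C_Ψ |v|^{-(d+α−1)} + ( 1_{α∈(1,2)} + 1_{α=1} log|v| + 1_{α∈(0,1)} |v|^{1−α} ) e^{-Ψ(v/2)} ]. -/
open MeasureTheory Real Filter Topology Set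
open scoped RealInnerProductSpace

noncomputable section

lemma radial_eq (d : ℕ) (hd : 0 < d) (s R : ℝ) (hR : 1 ≤ R) :
    ∫ u in {u : E d | ‖u‖ ∈ Ico 1 R}, ‖u‖ ^ (-s)
      = ((d : ℝ) * (volume (Metric.ball (0:E d) 1)).toReal) * ∫ y in (1:ℝ)..R, y ^ ((d:ℝ) - 1 - s) := by
  haveI : Nonempty (Fin d) := ⟨⟨0, hd⟩⟩
  haveI : Nontrivial (E d) := inferInstance
  have hA : MeasurableSet {u : E d | ‖u‖ ∈ Ico 1 R} := measurable_norm measurableSet_Ico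
  have h1 : ∫ u in {u : E d | ‖u‖ ∈ Ico 1 R}, ‖u‖ ^ (-s)
      = ∫ u : E d, (Ico (1:ℝ) R).indicator (fun r => r ^ (-s)) ‖u‖ := by
    rw [← integral_indicator hA]
    refine integral_congr_ae (Filter.Eventually.of_forall fun u => ?_)
    simp only [Set.indicator_apply, Set.mem_setOf_eq]
  rw [h1, integral_fun_norm_addHaar volume (fun r => (Ico (1:ℝ) R).indicator (fun r => r ^ (-s)) r)]
  have hdim : Module.finrank ℝ (E d) = d := by
    simp [finrank_euclideanSpace]
  rw [hdim]
  have h2 : ∫ y in Ioi (0:ℝ), y ^ (d - 1) • (Ico (1:ℝ) R).indicator (fun r => r ^ (-s)) y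
      = ∫ y in Ioi (0:ℝ), (Ico (1:ℝ) R).indicator (fun y => y ^ (d-1) * y ^ (-s)) y := by
    refine setIntegral_congr_fun measurableSet_Ioi (fun y hy => ?_)
    by_cases h : y ∈ Ico (1:ℝ) R <;> simp [Set.indicator, h, smul_eq_mul]
  have hsub : Ico (1:ℝ) R ∩ Ioi 0 = Ico 1 R :=
    Set.inter_eq_left.2 (fun y hy => lt_of_lt_of_le one_pos hy.1)
  rw [h2, integral_indicator measurableSet_Ico, Measure.restrict_restrict measurableSet_Ico, hsub]
  have h3 : ∫ y in Ico (1:ℝ) R, y ^ (d-1) * y ^ (-s)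
      = ∫ y in Ico (1:ℝ) R, y ^ ((d:ℝ) - 1 - s) := by
    refine setIntegral_congr_fun measurableSet_Ico (fun y hy => ?_)
    have hy0 : 0 < y := lt_of_lt_of_le one_pos hy.1
    rw [← Real.rpow_natCast y (d-1), ← Real.rpow_add hy0]
    congr 1
    push_cast [Nat.cast_sub hd]
    ring
  rw [h3, setIntegral_congr_set Ico_ae_eq_Ioc, ← intervalIntegral.integral_of_le hR,
    nsmul_eq_mul, smul_eq_mul, ← mul_assoc]
  rfl

/-- Uniform off-diagonal estimate: there is `C = C(d,α) > 0` such that for every radial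
nondecreasing `Ψ ≥ 0` with `C_Ψ = ∫ e^{-Ψ} < ∞`, and every `|v| ≥ 2`,
`∫_{|u|≥1} e^{-Ψ(v-u)} |u|^{-(d+α-1)} du
  ≤ C [C_Ψ |v|^{-(d+α-1)} + (1_{α∈(1,2)} + 1_{α=1} log|v| + 1_{α∈(0,1)} |v|^{1-α}) e^{-Ψ(v/2)}]`. -/
theorem statement13
    (d : ℕ) (hd : 0 < d) (α : ℝ) (hα : α ∈ Ioo (0 : ℝ) 2) :
    ∃ C > 0, ∀ Ψ : E d → ℝ, Measurable Ψ → (∀ v, 0 ≤ Ψ v) →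
      (∃ ρ : ℝ → ℝ, MonotoneOn ρ (Ici 0) ∧ ∀ v, Ψ v = ρ ‖v‖) →
      (Integrable fun u : E d => Real.exp (-(Ψ u))) →
      ∀ v : E d, 2 ≤ ‖v‖ →
        ∫ u in {u : E d | 1 ≤ ‖u‖}, Real.exp (-(Ψ (v - u))) * ‖u‖ ^ (-((d : ℝ) + α - 1))
          ≤ C * ((∫ u : E d, Real.exp (-(Ψ u))) * ‖v‖ ^ (-((d : ℝ) + α - 1))
              + ((if 1 < α then (1 : ℝ) else 0) + (if α = 1 then Real.log ‖v‖ else 0)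
                  + (if α < 1 then ‖v‖ ^ (1 - α) else 0))
                * Real.exp (-(Ψ (((1 : ℝ) / 2) • v)))) := by
  obtain ⟨hα0, hα2⟩ := hα
  set s : ℝ := (d:ℝ) + α - 1 with hs_def
  have hd1 : (1:ℝ) ≤ (d:ℝ) := by exact_mod_cast hd
  have hs_pos : 0 < s := by simp only [hs_def]; linarith
  set c : ℝ := (d:ℝ) * (volume (Metric.ball (0:E d) 1)).toReal with hc_def
  have hc0 : 0 ≤ c := mul_nonneg (Nat.cast_nonneg d) ENNReal.toReal_nonneg
  set Kα : ℝ := if 1 < α then (α-1)⁻¹ else if α = 1 then 1 else (1-α)⁻¹ with hK_def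
  have hK0 : 0 ≤ Kα := by
    rw [hK_def]; split_ifs with h1 h2
    · exact inv_nonneg.2 (by linarith)
    · norm_num
    · exact inv_nonneg.2 (by linarith [lt_of_le_of_ne (not_lt.1 h1) h2])
  refine ⟨2 ^ s + c * Kα + 1, by positivity, ?_⟩
  intro Ψ hΨm hΨ0 hrad hInt v hv
  obtain ⟨ρ, hρ, hΨρ⟩ := hrad
  have hv0 : (0:ℝ) < ‖v‖ := lt_of_lt_of_le two_pos hv
  set R : ℝ := ‖v‖ / 2 with hRdef
  have hR1 : 1 ≤ R := by rw [hRdef]; linarith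
  have hR0 : 0 < R := lt_of_lt_of_le one_pos hR1
  set S : Set (E d) := {u : E d | 1 ≤ ‖u‖} with hS_def
  set S1 : Set (E d) := {u : E d | R ≤ ‖u‖} with hS1_def
  set S2 : Set (E d) := {u : E d | ‖u‖ ∈ Ico 1 R} with hS2_def
  have hSm : MeasurableSet S := measurableSet_le measurable_const measurable_norm
  have hS1m : MeasurableSet S1 := measurableSet_le measurable_const measurable_norm
  have hS2m : MeasurableSet S2 := measurable_norm measurableSet_Ico
  have hUnion : S = S1 ∪ S2 := by
    ext u
    simp only [hS_def, hS1_def, hS2_def, Set.mem_union, Set.mem_setOf_eq, Set.mem_Ico]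
    constructor
    · intro h1
      rcases le_or_gt R ‖u‖ with h | h
      · exact Or.inl h
      · exact Or.inr ⟨h1, h⟩
    · rintro (h | h)
      · linarith
      · exact h.1
  have hdisj : Disjoint S1 S2 := by
    rw [Set.disjoint_left]
    intro u h1 h2
    exact absurd h1 (not_le.2 h2.2)
  set f : E d → ℝ := fun u => Real.exp (-(Ψ (v - u))) * ‖u‖ ^ (-s) with hf_def
  have hfm : Measurable f :=
    ((hΨm.comp (measurable_id.const_sub v)).neg.exp).mul (measurable_norm.pow_const (-s))
  have hIntv : Integrable (fun u : E d => Real.exp (-(Ψ (v - u)))) := hInt.comp_sub_left v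
  have hfS : IntegrableOn f S := by
    refine Integrable.mono' hIntv.integrableOn hfm.aestronglyMeasurable.restrict ?_
    filter_upwards [ae_restrict_mem hSm] with u hu
    rw [Real.norm_eq_abs,
      abs_of_nonneg (mul_nonneg (Real.exp_nonneg _) (Real.rpow_nonneg (norm_nonneg _) _))]
    calc f u ≤ Real.exp (-(Ψ (v - u))) * 1 :=
          mul_le_mul_of_nonneg_left
            (Real.rpow_le_one_of_one_le_of_nonpos hu (neg_nonpos.2 hs_pos.le))
            (Real.exp_nonneg _)
      _ = Real.exp (-(Ψ (v - u))) := mul_one _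
  have hfS1 : IntegrableOn f S1 := hfS.mono_set (by rw [hUnion]; exact Set.subset_union_left)
  have hfS2 : IntegrableOn f S2 := hfS.mono_set (by rw [hUnion]; exact Set.subset_union_right)
  have hsplit : ∫ u in S, f u = (∫ u in S1, f u) + ∫ u in S2, f u := by
    rw [hUnion]
    exact setIntegral_union hdisj hS2m hfS1 hfS2
  -- first piece
  have hCΨ0 : 0 ≤ ∫ u : E d, Real.exp (-(Ψ u)) :=
    integral_nonneg fun u => (Real.exp_nonneg _)
  have hb1 : ∫ u in S1, f u ≤ 2 ^ s * ((∫ u : E d, Real.exp (-(Ψ u))) * ‖v‖ ^ (-s)) := by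
    have g1int : Integrable (fun u : E d => Real.exp (-(Ψ (v - u))) * R ^ (-s)) :=
      hIntv.mul_const _
    have step1 : ∫ u in S1, f u ≤ ∫ u in S1, Real.exp (-(Ψ (v - u))) * R ^ (-s) := by
      refine setIntegral_mono_on hfS1 g1int.integrableOn hS1m (fun u hu => ?_)
      exact mul_le_mul_of_nonneg_left
        (Real.rpow_le_rpow_of_nonpos hR0 hu (neg_nonpos.2 hs_pos.le)) (Real.exp_nonneg _)
    have step2 : ∫ u in S1, Real.exp (-(Ψ (v - u))) * R ^ (-s)
        ≤ ∫ u : E d, Real.exp (-(Ψ (v - u))) * R ^ (-s) := by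
      refine setIntegral_le_integral g1int (Filter.Eventually.of_forall fun u => ?_)
      positivity
    have step3 : ∫ u : E d, Real.exp (-(Ψ (v - u))) * R ^ (-s)
        = (∫ u : E d, Real.exp (-(Ψ u))) * R ^ (-s) := by
      rw [integral_mul_const, integral_sub_left_eq_self (fun u => Real.exp (-(Ψ u))) volume v]
    have hRs : R ^ (-s) = 2 ^ s * ‖v‖ ^ (-s) := by
      rw [hRdef, Real.div_rpow (norm_nonneg v) (by norm_num : (0:ℝ) ≤ 2), div_eq_mul_inv,
        ← Real.rpow_neg (by norm_num : (0:ℝ) ≤ 2), neg_neg, mul_comm]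
    calc ∫ u in S1, f u ≤ (∫ u : E d, Real.exp (-(Ψ u))) * R ^ (-s) :=
          (step1.trans step2).trans_eq step3
      _ = 2 ^ s * ((∫ u : E d, Real.exp (-(Ψ u))) * ‖v‖ ^ (-s)) := by
          rw [hRs]; ring
  -- second piece
  have hnorm : ‖((1:ℝ)/2) • v‖ = R := by
    rw [norm_smul, Real.norm_eq_abs, abs_of_nonneg (by norm_num : (0:ℝ) ≤ 1/2), hRdef]
    ring
  have hg2int : IntegrableOn (fun u : E d => ‖u‖ ^ (-s)) S2 := by
    have hfin : volume S2 < ⊤ := by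
      refine lt_of_le_of_lt (measure_mono (fun u hu => ?_)) (measure_closedBall_lt_top (x := (0 : E d)) (r := R))
      exact Metric.mem_closedBall.2 (by simpa using (le_of_lt hu.2))
    refine Integrable.mono' (g := fun _ : E d => (1:ℝ)) ((integrableOn_const_iff (C := (1:ℝ))).2 (Or.inr hfin))
      ((measurable_norm.pow_const (-s)).aestronglyMeasurable.restrict) ?_
    filter_upwards [ae_restrict_mem hS2m] with u hu
    rw [Real.norm_eq_abs, abs_of_nonneg (Real.rpow_nonneg (norm_nonneg _) _)]
    exact Real.rpow_le_one_of_one_le_of_nonpos hu.1 (neg_nonpos.2 hs_pos.le)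
  have hb2 : ∫ u in S2, f u
      ≤ Real.exp (-(Ψ (((1:ℝ)/2) • v))) * ∫ u in S2, ‖u‖ ^ (-s) := by
    have hmono : ∫ u in S2, f u
        ≤ ∫ u in S2, Real.exp (-(Ψ (((1:ℝ)/2) • v))) * ‖u‖ ^ (-s) := by
      refine setIntegral_mono_on hfS2 (hg2int.const_mul _) hS2m (fun u hu => ?_)
      have h1 : Ψ (((1:ℝ)/2) • v) ≤ Ψ (v - u) := by
        rw [hΨρ, hΨρ, hnorm]
        refine hρ (Set.mem_Ici.2 hR0.le) (Set.mem_Ici.2 (norm_nonneg _)) ?_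
        calc R = ‖v‖ - R := by rw [hRdef]; ring
          _ ≤ ‖v‖ - ‖u‖ := by linarith [hu.2]
          _ ≤ ‖v - u‖ := norm_sub_norm_le v u
      exact mul_le_mul_of_nonneg_right (Real.exp_le_exp.2 (neg_le_neg h1))
        (Real.rpow_nonneg (norm_nonneg _) _)
    exact hmono.trans_eq (integral_const_mul _ _)
  -- radial computation
  have hre : ∫ u in S2, ‖u‖ ^ (-s) = c * ∫ y in (1:ℝ)..R, y ^ (-α) := by
    have hexp : (d:ℝ) - 1 - s = -α := by rw [hs_def]; ring
    rw [hS2_def, radial_eq d hd s R hR1, hexp, hc_def]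
  set B : ℝ := (if 1 < α then (1 : ℝ) else 0) + (if α = 1 then Real.log ‖v‖ else 0)
      + (if α < 1 then ‖v‖ ^ (1 - α) else 0) with hB_def
  have hint_bound : ∫ y in (1:ℝ)..R, y ^ (-α) ≤ Kα * B := by
    rcases lt_trichotomy α 1 with hlt | heq | hgt
    · have hval : ∫ y in (1:ℝ)..R, y ^ (-α) = (R ^ (-α+1) - 1 ^ (-α+1)) / (-α+1) :=
        integral_rpow (Or.inl (by linarith))
      have hBv : B = ‖v‖ ^ (1 - α) := by
        rw [hB_def]
        simp [hlt, not_lt.2 hlt.le, ne_of_lt hlt]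
      rw [hval, hBv, hK_def, if_neg (not_lt.2 hlt.le), if_neg (ne_of_lt hlt)]
      have hRle : R ^ (-α+1) ≤ ‖v‖ ^ (1-α) := by
        have : R ≤ ‖v‖ := by rw [hRdef]; linarith
        have h := Real.rpow_le_rpow hR0.le this (by linarith : (0:ℝ) ≤ 1 - α)
        rw [show (-α+1:ℝ) = 1-α by ring]
        exact h
      rw [Real.one_rpow, div_le_iff₀ (by linarith : (0:ℝ) < -α + 1)]
      have h3 : (1-α:ℝ) ≠ 0 := by linarith
      have h2 : (1-α)⁻¹ * ‖v‖ ^ (1-α) * (-α+1) = ‖v‖ ^ (1-α) := by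
        rw [show (-α+1:ℝ) = 1-α by ring, mul_comm ((1-α:ℝ))⁻¹ _, mul_assoc,
          inv_mul_cancel₀ h3, mul_one]
      linarith
    · subst heq
      have hval : ∫ y in (1:ℝ)..R, y ^ (-(1:ℝ)) = Real.log R := by
        rw [show (∫ y in (1:ℝ)..R, y ^ (-(1:ℝ))) = ∫ y in (1:ℝ)..R, y⁻¹ by
          refine intervalIntegral.integral_congr (fun y hy => Real.rpow_neg_one y),
          integral_inv (by exact Set.notMem_uIcc_of_lt one_pos hR0)]
        simp
      have hBv : B = Real.log ‖v‖ := by rw [hB_def]; simp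
      rw [hval, hBv, hK_def]
      norm_num
      have : R ≤ ‖v‖ := by rw [hRdef]; linarith
      exact Real.log_le_log hR0 this
    · have hval : ∫ y in (1:ℝ)..R, y ^ (-α) = (R ^ (-α+1) - 1 ^ (-α+1)) / (-α+1) :=
        integral_rpow (Or.inr ⟨fun h => (ne_of_gt hgt) (neg_injective h),
          Set.notMem_uIcc_of_lt one_pos hR0⟩)
      have hBv : B = 1 := by
        rw [hB_def]
        simp [hgt, not_lt.2 hgt.le, ne_of_gt hgt]
      rw [hval, hBv, hK_def, if_pos hgt, mul_one, Real.one_rpow]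
      have hRx : 0 ≤ R ^ (-α+1) := Real.rpow_nonneg hR0.le _
      have heq2 : (R ^ (-α+1) - 1) / (-α+1) = (1 - R ^ (-α+1)) / (α-1) := by
        rw [div_eq_div_iff (by linarith) (by linarith)]
        ring
      rw [heq2, ← one_div (α - 1)]
      gcongr <;> linarith
  -- nonnegativity facts
  have hB0 : 0 ≤ B := by
    rw [hB_def]
    have h1 : (0:ℝ) ≤ if 1 < α then (1:ℝ) else 0 := by split_ifs <;> norm_num
    have h2 : (0:ℝ) ≤ if α = 1 then Real.log ‖v‖ else 0 := by
      split_ifs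
      · exact Real.log_nonneg (by linarith)
      · exact le_refl 0
    have h3 : (0:ℝ) ≤ if α < 1 then ‖v‖ ^ (1-α) else 0 := by
      split_ifs
      · positivity
      · exact le_refl 0
    linarith
  have hT1 : 0 ≤ (∫ u : E d, Real.exp (-(Ψ u))) * ‖v‖ ^ (-s) :=
    mul_nonneg hCΨ0 (Real.rpow_nonneg (norm_nonneg v) _)
  have hT2 : 0 ≤ B * Real.exp (-(Ψ (((1:ℝ)/2) • v))) :=
    mul_nonneg hB0 (Real.exp_nonneg _)
  have h2s : (0:ℝ) < 2 ^ s := Real.rpow_pos_of_pos two_pos s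
  have hcK : 0 ≤ c * Kα := mul_nonneg hc0 hK0
  calc ∫ u in S, f u = (∫ u in S1, f u) + ∫ u in S2, f u := hsplit
    _ ≤ 2 ^ s * ((∫ u : E d, Real.exp (-(Ψ u))) * ‖v‖ ^ (-s))
        + Real.exp (-(Ψ (((1:ℝ)/2) • v))) * (c * ∫ y in (1:ℝ)..R, y ^ (-α)) := by
        refine add_le_add hb1 (hb2.trans_eq ?_)
        rw [hre]
    _ ≤ 2 ^ s * ((∫ u : E d, Real.exp (-(Ψ u))) * ‖v‖ ^ (-s))
        + (c * Kα) * (B * Real.exp (-(Ψ (((1:ℝ)/2) • v)))) := by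
        have step : Real.exp (-(Ψ (((1:ℝ)/2) • v))) * (c * ∫ y in (1:ℝ)..R, y ^ (-α))
            ≤ Real.exp (-(Ψ (((1:ℝ)/2) • v))) * (c * (Kα * B)) :=
          mul_le_mul_of_nonneg_left (mul_le_mul_of_nonneg_left hint_bound hc0)
            (Real.exp_nonneg _)
        have heq3 : Real.exp (-(Ψ (((1:ℝ)/2) • v))) * (c * (Kα * B))
            = (c * Kα) * (B * Real.exp (-(Ψ (((1:ℝ)/2) • v)))) := by ring
        linarith
    _ ≤ (2 ^ s + c * Kα + 1) * ((∫ u : E d, Real.exp (-(Ψ u))) * ‖v‖ ^ (-s))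
        + (2 ^ s + c * Kα + 1) * (B * Real.exp (-(Ψ (((1:ℝ)/2) • v)))) := by
        refine add_le_add (mul_le_mul_of_nonneg_right (by linarith) hT1)
          (mul_le_mul_of_nonneg_right (by linarith) hT2)
    _ = (2 ^ s + c * Kα + 1) * ((∫ u : E d, Real.exp (-(Ψ u))) * ‖v‖ ^ (-s)
        + B * Real.exp (-(Ψ (((1:ℝ)/2) • v)))) := by ring
end
end

section
/- Let α ∈ (0,2) and let d be a positive integer. There exists a constant C = C(d,α) > 0 such that for every measurable radial nondecreasing Ψ : ℝ^d → [0,∞) with C_Ψ := ∫_{ℝ^d} e^{-Ψ(u)} du < ∞ and every v ∈ ℝ^d with |v| ≥ 2: ∫_{|u|≥1} e^{-Ψ(v−u)} |u|^{-(d+α)} du ≤ C [ C_Ψ |v|^{-(d+α)} + e^{-Ψ(v/2)} ]. -/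
open MeasureTheory Real Filter Topology Set
open scoped RealInnerProductSpace

noncomputable section

/-- Uniform off-diagonal estimate: there is `C = C(d,α) > 0` such that for every radial
nondecreasing `Ψ ≥ 0` with `C_Ψ = ∫ e^{-Ψ} < ∞`, and every `|v| ≥ 2`,
`∫_{|u|≥1} e^{-Ψ(v-u)} |u|^{-(d+α)} du ≤ C [C_Ψ |v|^{-(d+α)} + e^{-Ψ(v/2)}]`. -/
theorem statement14
    (d : ℕ) (hd : 0 < d) (α : ℝ) (hα : α ∈ Ioo (0 : ℝ) 2) :
    ∃ C > 0, ∀ Ψ : E d → ℝ, Measurable Ψ → (∀ v, 0 ≤ Ψ v) →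
      (∃ ρ : ℝ → ℝ, MonotoneOn ρ (Ici 0) ∧ ∀ v, Ψ v = ρ ‖v‖) →
      (Integrable fun u : E d => Real.exp (-(Ψ u))) →
      ∀ v : E d, 2 ≤ ‖v‖ →
        ∫ u in {u : E d | 1 ≤ ‖u‖}, Real.exp (-(Ψ (v - u))) * ‖u‖ ^ (-((d : ℝ) + α))
          ≤ C * ((∫ u : E d, Real.exp (-(Ψ u))) * ‖v‖ ^ (-((d : ℝ) + α))
              + Real.exp (-(Ψ (((1 : ℝ) / 2) • v)))) := by
  obtain ⟨hα0, hα2⟩ := hα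
  set s : ℝ := (d : ℝ) + α with hs_def
  have hs0 : 0 < s := by positivity
  have hfin : (Module.finrank ℝ (E d) : ℝ) < s := by
    rw [finrank_euclideanSpace, Fintype.card_fin]
    linarith
  have hSmeas : MeasurableSet {u : E d | 1 ≤ ‖u‖} :=
    (isClosed_le continuous_const continuous_norm).measurableSet
  have hg_meas : Measurable fun u : E d => ‖u‖ ^ (-s) :=
    measurable_norm.pow_const (-s) |>.comp measurable_id |>.mono le_rfl le_rfl
  have hgInt : IntegrableOn (fun u : E d => ‖u‖ ^ (-s)) {u : E d | 1 ≤ ‖u‖} := by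
    have hInt1 : Integrable (fun u : E d => (2 : ℝ) ^ s * (1 + ‖u‖) ^ (-s)) :=
      (integrable_one_add_norm hfin).const_mul _
    refine Integrable.mono' hInt1.restrict hg_meas.aestronglyMeasurable ?_
    rw [ae_restrict_iff' hSmeas]
    filter_upwards with u hu
    have hu1 : (1 : ℝ) ≤ ‖u‖ := hu
    rw [Real.norm_eq_abs, abs_of_nonneg (Real.rpow_nonneg (norm_nonneg u) _)]
    have h1 : ((1 + ‖u‖) / 2) ^ (-s) = 2 ^ s * (1 + ‖u‖) ^ (-s) := by
      rw [Real.div_rpow (by linarith) (by norm_num), Real.rpow_neg (by linarith),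
        Real.rpow_neg (by norm_num : (0:ℝ) ≤ 2)]
      field_simp
    rw [← h1]
    exact Real.rpow_le_rpow_of_nonpos (by linarith) (by linarith) (by linarith)
  set K : ℝ := ∫ u in {u : E d | 1 ≤ ‖u‖}, ‖u‖ ^ (-s) with hK_def
  have hK0 : 0 ≤ K :=
    setIntegral_nonneg hSmeas fun u _ => Real.rpow_nonneg (norm_nonneg u) _
  refine ⟨(2 : ℝ) ^ s + K + 1, by positivity, ?_⟩
  rintro Ψ hΨm hΨ0 ⟨ρ, hρ, hρΨ⟩ hΨint v hv
  have hv0 : (0 : ℝ) < ‖v‖ := by linarith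
  set S : Set (E d) := {u : E d | 1 ≤ ‖u‖} with hS_def
  set S2 : Set (E d) := {u : E d | ‖v‖ / 2 ≤ ‖u‖} with hS2_def
  have hS2meas : MeasurableSet S2 :=
    (isClosed_le continuous_const continuous_norm).measurableSet
  have hS2sub : S2 ⊆ S := fun u hu => by
    simp only [hS2_def, hS_def, mem_setOf_eq] at *
    linarith
  set f : E d → ℝ := fun u => Real.exp (-(Ψ (v - u))) * ‖u‖ ^ (-s) with hf_def
  have hf_meas : Measurable f := by
    apply Measurable.mul
    · exact (Real.measurable_exp.comp ((hΨm.comp (measurable_const.sub measurable_id)).neg))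
    · exact hg_meas
  have hfnn : ∀ u, 0 ≤ f u := fun u =>
    mul_nonneg (Real.exp_nonneg _) (Real.rpow_nonneg (norm_nonneg u) _)
  have hfInt : IntegrableOn f S := by
    refine Integrable.mono' hgInt hf_meas.aestronglyMeasurable ?_
    filter_upwards with u
    rw [Real.norm_eq_abs, abs_of_nonneg (hfnn u)]
    calc f u ≤ 1 * ‖u‖ ^ (-s) := by
          apply mul_le_mul_of_nonneg_right _ (Real.rpow_nonneg (norm_nonneg u) _)
          exact Real.exp_le_one_iff.mpr (neg_nonpos.mpr (hΨ0 _))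
      _ = ‖u‖ ^ (-s) := one_mul _
  -- translation invariance
  have htrans : (∫ u : E d, Real.exp (-(Ψ (v - u)))) = ∫ u : E d, Real.exp (-(Ψ u)) :=
    integral_sub_left_eq_self (fun u => Real.exp (-(Ψ u))) volume v
  have htransInt : Integrable fun u : E d => Real.exp (-(Ψ (v - u))) :=
    hΨint.comp_sub_left v
  have hCΨ0 : 0 ≤ ∫ u : E d, Real.exp (-(Ψ u)) :=
    integral_nonneg fun u => Real.exp_nonneg _
  -- split S into S \ S2 and S2
  have hsplit : ∫ u in S, f u = (∫ u in S \ S2, f u) + ∫ u in S2, f u := by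
    rw [← setIntegral_union disjoint_sdiff_self_left hS2meas
      (hfInt.mono_set diff_subset) (hfInt.mono_set hS2sub), Set.diff_union_of_subset hS2sub]
  -- bound on S \ S2
  have hbound1 : ∫ u in S \ S2, f u ≤ Real.exp (-(Ψ (((1:ℝ)/2) • v))) * K := by
    have hhalf : ‖((1:ℝ)/2) • v‖ = ‖v‖ / 2 := by
      rw [norm_smul, Real.norm_eq_abs, abs_of_pos (by norm_num : (0:ℝ) < 1/2)]
      ring
    have step1 : ∫ u in S \ S2, f u
        ≤ ∫ u in S \ S2, Real.exp (-(Ψ (((1:ℝ)/2) • v))) * ‖u‖ ^ (-s) := by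
      refine setIntegral_mono_on (hfInt.mono_set diff_subset)
        ((hgInt.mono_set diff_subset).const_mul _) (hSmeas.diff hS2meas) ?_
      rintro u ⟨hu1, hu2⟩
      have hu2' : ‖u‖ < ‖v‖ / 2 := lt_of_not_ge hu2
      have hnorm : ‖v‖ / 2 ≤ ‖v - u‖ := by
        have := norm_sub_norm_le v u
        linarith [norm_sub_norm_le v u]
      have hΨle : Ψ (((1:ℝ)/2) • v) ≤ Ψ (v - u) := by
        rw [hρΨ, hρΨ, hhalf]
        exact hρ (mem_Ici.mpr (by positivity)) (mem_Ici.mpr (norm_nonneg _)) hnorm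
      exact mul_le_mul_of_nonneg_right
        (Real.exp_le_exp.mpr (neg_le_neg hΨle)) (Real.rpow_nonneg (norm_nonneg u) _)
    have step2 : ∫ u in S \ S2, Real.exp (-(Ψ (((1:ℝ)/2) • v))) * ‖u‖ ^ (-s)
        ≤ Real.exp (-(Ψ (((1:ℝ)/2) • v))) * K := by
      rw [integral_const_mul]
      apply mul_le_mul_of_nonneg_left _ (Real.exp_nonneg _)
      exact setIntegral_mono_set hgInt
        (Filter.Eventually.of_forall fun u => Real.rpow_nonneg (norm_nonneg u) _)
        (HasSubset.Subset.eventuallyLE diff_subset)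
    linarith
  -- bound on S2
  have hbound2 : ∫ u in S2, f u
      ≤ 2 ^ s * ((∫ u : E d, Real.exp (-(Ψ u))) * ‖v‖ ^ (-s)) := by
    have hconst : ∀ u ∈ S2, f u ≤ Real.exp (-(Ψ (v - u))) * (2 ^ s * ‖v‖ ^ (-s)) := by
      intro u hu
      have hu' : ‖v‖ / 2 ≤ ‖u‖ := hu
      have h1 : ‖u‖ ^ (-s) ≤ (‖v‖ / 2) ^ (-s) :=
        Real.rpow_le_rpow_of_nonpos (by positivity) hu' (by linarith)
      have h2 : (‖v‖ / 2) ^ (-s) = 2 ^ s * ‖v‖ ^ (-s) := by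
        rw [Real.div_rpow hv0.le (by norm_num), Real.rpow_neg hv0.le,
          Real.rpow_neg (by norm_num : (0:ℝ) ≤ 2)]
        field_simp
      rw [← h2]
      exact mul_le_mul_of_nonneg_left h1 (Real.exp_nonneg _)
    have step1 : ∫ u in S2, f u
        ≤ ∫ u in S2, Real.exp (-(Ψ (v - u))) * (2 ^ s * ‖v‖ ^ (-s)) :=
      setIntegral_mono_on (hfInt.mono_set hS2sub)
        ((htransInt.mul_const _).restrict) hS2meas hconst
    have step2 : ∫ u in S2, Real.exp (-(Ψ (v - u))) * (2 ^ s * ‖v‖ ^ (-s))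
        ≤ 2 ^ s * ((∫ u : E d, Real.exp (-(Ψ u))) * ‖v‖ ^ (-s)) := by
      rw [integral_mul_const, ← htrans]
      have h3 : ∫ u in S2, Real.exp (-(Ψ (v - u))) ≤ ∫ u : E d, Real.exp (-(Ψ (v - u))) :=
        setIntegral_le_integral htransInt
          (Filter.Eventually.of_forall fun u => Real.exp_nonneg _)
      calc (∫ u in S2, Real.exp (-(Ψ (v - u)))) * (2 ^ s * ‖v‖ ^ (-s))
          ≤ (∫ u : E d, Real.exp (-(Ψ (v - u)))) * (2 ^ s * ‖v‖ ^ (-s)) := by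
            apply mul_le_mul_of_nonneg_right h3 (by positivity)
        _ = 2 ^ s * ((∫ u : E d, Real.exp (-(Ψ (v - u)))) * ‖v‖ ^ (-s)) := by ring
    linarith
  -- combine
  have hvs : 0 ≤ ‖v‖ ^ (-s) := Real.rpow_nonneg hv0.le _
  have hexp0 : 0 ≤ Real.exp (-(Ψ (((1:ℝ)/2) • v))) := Real.exp_nonneg _
  have h2s : (0:ℝ) < 2 ^ s := by positivity
  calc ∫ u in S, f u = (∫ u in S \ S2, f u) + ∫ u in S2, f u := hsplit
    _ ≤ Real.exp (-(Ψ (((1:ℝ)/2) • v))) * K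
        + 2 ^ s * ((∫ u : E d, Real.exp (-(Ψ u))) * ‖v‖ ^ (-s)) := by linarith
    _ ≤ (2 ^ s + K + 1) * ((∫ u : E d, Real.exp (-(Ψ u))) * ‖v‖ ^ (-s)
        + Real.exp (-(Ψ (((1:ℝ)/2) • v)))) := by
        nlinarith [mul_nonneg hCΨ0 hvs, mul_nonneg (mul_nonneg hCΨ0 hvs) hK0,
          mul_nonneg hexp0 h2s.le]
end
end

section
/- Let H be a real Hilbert space and π : H → H a bounded linear operator with π ∘ π = π and ⟨πu, w⟩ = ⟨u, πw⟩ for all u, w ∈ H (orthogonal projection). Let λ, α₁, α₂ > 0 and α₃ ≥ 1, and set ε₀ := (1/2) min{ √λ, (1+λα₂)/α₁, 1/(α₁(1+λα₂)α₃²) }. Let B : H → H be a bounded linear operator and suppose f, g ∈ H satisfy: (i) ⟨g, f⟩ ≤ −(1/α₁) ‖f − πf‖²; (ii) |⟨Bf, g⟩| ≤ ‖f − πf‖ · ‖f‖; (iii) ⟨Bg, f⟩ ≤ −(1/(1+λα₂)) ‖πf‖² + α₃ ‖πf‖ · ‖f − πf‖. Then ⟨g, f⟩ + ε₀ ( ⟨Bf,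 g⟩ + ⟨Bg, f⟩ ) ≤ −( ε₀ / (4(1+λα₂)) ) ‖f‖². (This is the key dissipation inequality in the proof of the hypocoercivity theorem for the modified entropy functional I_λ(f) = (1/2)‖f‖² + ε₀⟨Bf, f⟩, applied along a trajectory with g = Lf.) -/
open scoped RealInnerProductSpace

set_option maxHeartbeats 1000000 in
/-- The key dissipation inequality in the proof of the hypocoercivity theorem for the
modified entropy functional `I_λ(f) = (1/2)‖f‖² + ε₀⟨Bf, f⟩`, applied along a trajectory
with `g = Lf`. -/
theorem statement15
    {H : Type*} [NormedAddCommGroup H] [InnerProductSpace ℝ H]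
    (P : H →L[ℝ] H) (hproj : ∀ u, P (P u) = P u)
    (hsym : ∀ u w : H, ⟪P u, w⟫ = ⟪u, P w⟫)
    (lam α₁ α₂ α₃ : ℝ) (hlam : 0 < lam) (hα₁ : 0 < α₁) (hα₂ : 0 < α₂) (hα₃ : 1 ≤ α₃)
    (ε₀ : ℝ)
    (hε₀ : ε₀ = (1 / 2) * min (Real.sqrt lam)
      (min ((1 + lam * α₂) / α₁) (1 / (α₁ * (1 + lam * α₂) * α₃ ^ 2))))
    (B : H →L[ℝ] H) (f g : H)
    (h1 : ⟪g, f⟫ ≤ -(1 / α₁) * ‖f - P f‖ ^ 2)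
    (h2 : |⟪B f, g⟫| ≤ ‖f - P f‖ * ‖f‖)
    (h3 : ⟪B g, f⟫ ≤ -(1 / (1 + lam * α₂)) * ‖P f‖ ^ 2 + α₃ * ‖P f‖ * ‖f - P f‖) :
    ⟪g, f⟫ + ε₀ * (⟪B f, g⟫ + ⟪B g, f⟫) ≤ -(ε₀ / (4 * (1 + lam * α₂))) * ‖f‖ ^ 2 := by
  set c : ℝ := 1 + lam * α₂ with hc_def
  have hc1 : 1 < c := by nlinarith [mul_pos hlam hα₂]
  have hc0 : (0:ℝ) < c := by linarith
  have hα₃0 : (0:ℝ) < α₃ := by linarith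
  have hd : (0:ℝ) < α₁ * c * α₃ ^ 2 := by positivity
  have hε_pos : 0 < ε₀ := by
    rw [hε₀]
    have hs : 0 < Real.sqrt lam := Real.sqrt_pos.mpr hlam
    have hm : 0 < min (Real.sqrt lam) (min (c / α₁) (1 / (α₁ * c * α₃ ^ 2))) :=
      lt_min hs (lt_min (by positivity) (by positivity))
    linarith
  have hε_le : ε₀ ≤ 1 / 2 / (α₁ * c * α₃ ^ 2) := by
    rw [show (1:ℝ) / 2 / (α₁ * c * α₃ ^ 2) = (1/2) * (1 / (α₁ * c * α₃ ^ 2)) by ring]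
    rw [hε₀]
    exact mul_le_mul_of_nonneg_left ((min_le_right _ _).trans (min_le_right _ _)) (by norm_num)
  have hεα : 2 * α₁ * ε₀ * c * α₃ ^ 2 ≤ 1 := by
    have := (le_div_iff₀ hd).mp hε_le
    nlinarith
  -- Pythagoras
  have horth : ⟪f - P f, P f⟫ = 0 := by
    rw [inner_sub_left]
    have h := hsym f (P f)
    rw [hproj] at h
    rw [h]
    exact sub_self _
  have hpyth : ‖f‖ ^ 2 = ‖f - P f‖ ^ 2 + ‖P f‖ ^ 2 := by
    have hf : f = (f - P f) + P f := by abel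
    calc ‖f‖ ^ 2 = ‖(f - P f) + P f‖ ^ 2 := by rw [← hf]
    _ = ‖f - P f‖ ^ 2 + 2 * ⟪f - P f, P f⟫ + ‖P f‖ ^ 2 := norm_add_sq_real _ _
    _ = ‖f - P f‖ ^ 2 + ‖P f‖ ^ 2 := by rw [horth]; ring
  set a : ℝ := ‖f - P f‖ with ha_def
  set b : ℝ := ‖P f‖ with hb_def
  set F : ℝ := ‖f‖ with hF_def
  have ha0 : 0 ≤ a := norm_nonneg _
  have hb0 : 0 ≤ b := norm_nonneg _
  have hF0 : 0 ≤ F := norm_nonneg _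
  have h2' : ⟪B f, g⟫ ≤ a * F := le_of_abs_le h2
  -- clear denominators
  have h1' : α₁ * ⟪g, f⟫ ≤ -(a ^ 2) := by
    have h := mul_le_mul_of_nonneg_left h1 hα₁.le
    calc α₁ * ⟪g, f⟫ ≤ α₁ * (-(1 / α₁) * a ^ 2) := h
    _ = -(a ^ 2) := by field_simp
  have h3' : c * ⟪B g, f⟫ ≤ -(b ^ 2) + c * (α₃ * b * a) := by
    have h := mul_le_mul_of_nonneg_left h3 hc0.le
    calc c * ⟪B g, f⟫ ≤ c * (-(1 / c) * b ^ 2 + α₃ * b * a) := h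
    _ = -(b ^ 2) + c * (α₃ * b * a) := by field_simp
  -- reduce goal to a cleared-denominator inequality
  rw [show -(ε₀ / (4 * c)) * F ^ 2 = (-(ε₀ * F ^ 2)) / (4 * c) by ring,
    le_div_iff₀ (by positivity : (0:ℝ) < 4 * c)]
  have hmul := mul_le_mul_iff_right₀ hα₁ (b := (⟪g, f⟫ + ε₀ * (⟪B f, g⟫ + ⟪B g, f⟫)) * (4 * c))
    (c := -(ε₀ * F ^ 2))
  rw [← hmul]
  -- multiplied pieces
  have t1 : 4 * c * (α₁ * ⟪g, f⟫) ≤ 4 * c * (-(a ^ 2)) :=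
    mul_le_mul_of_nonneg_left h1' (by positivity)
  have t2 : (4 * c * α₁ * ε₀) * ⟪B f, g⟫ ≤ (4 * c * α₁ * ε₀) * (a * F) :=
    mul_le_mul_of_nonneg_left h2' (by positivity)
  have t3 : (4 * α₁ * ε₀) * (c * ⟪B g, f⟫) ≤ (4 * α₁ * ε₀) * (-(b ^ 2) + c * (α₃ * b * a)) :=
    mul_le_mul_of_nonneg_left h3' (by positivity)
  have e1 : 2 * α₁ * ε₀ * c ≤ 1 := by
    nlinarith [hεα, mul_nonneg (mul_nonneg (mul_nonneg hα₁.le hε_pos.le) hc0.le)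
      (show (0:ℝ) ≤ α₃ ^ 2 - 1 by nlinarith)]
  have e2 : 2 * α₁ * ε₀ ≤ c := by
    nlinarith [e1, mul_nonneg (mul_nonneg hα₁.le hε_pos.le) (show (0:ℝ) ≤ c - 1 by linarith)]
  have eA : 4 * c * α₁ * ε₀ * (a * F) ≤ α₁ * ε₀ * (4 * c ^ 2 * a ^ 2 + F ^ 2) := by
    nlinarith [mul_nonneg (mul_nonneg hα₁.le hε_pos.le) (sq_nonneg (2 * c * a - F))]
  have eB : 4 * α₁ * ε₀ * c * α₃ * (a * b) ≤ c * a ^ 2 + 2 * α₁ * ε₀ * b ^ 2 := by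
    nlinarith [sq_nonneg (c * a - 2 * α₁ * ε₀ * c * α₃ * b),
      mul_le_mul_of_nonneg_right hεα (show (0:ℝ) ≤ 2 * α₁ * ε₀ * c * b ^ 2 by positivity),
      hc0]
  have e1a : 4 * α₁ * ε₀ * c ^ 2 * a ^ 2 ≤ 2 * c * a ^ 2 := by
    nlinarith [mul_le_mul_of_nonneg_right e1 (show (0:ℝ) ≤ 2 * c * a ^ 2 by positivity)]
  have e2a : 2 * α₁ * ε₀ * a ^ 2 ≤ c * a ^ 2 := mul_le_mul_of_nonneg_right e2 (sq_nonneg a)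
  have hp2 : α₁ * ε₀ * F ^ 2 = α₁ * ε₀ * (a ^ 2 + b ^ 2) := by rw [hpyth]
  have key : 4 * c * (-(a ^ 2)) + (4 * c * α₁ * ε₀) * (a * F)
      + (4 * α₁ * ε₀) * (-(b ^ 2) + c * (α₃ * b * a)) ≤ α₁ * (-(ε₀ * F ^ 2)) := by
    nlinarith [eA, eB, e1a, e2a, hp2]
  linarith [t1, t2, t3, key]
end
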